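/- arXiv:2410.16886 — 8 statements merged into one kernel-verified Lean document; each statement's English description precedes it below -/
import Mathlib

section
/- Let Γ be a set (regarded as a discrete topological space) and let X be a closed linear subspace of c₀(Γ). For every countable subset I ⊆ Γ there exists a countable subset J ⊆ Γ with I ⊆ J such that for every x ∈ X the pointwise product of x with the indicator function of J again belongs to X. -/
open scoped ZeroAtInfty
open Filter Topology

noncomputable section

/-- The pointwise product of `x ∈ c₀(Γ)` with the indicator function of `J ⊆ Γ`, as an element
of `c₀(Γ)` (here `Γ` is discrete). -/
def c0Restrict {Γ : Type*} [TopologicalSpace Γ] [DiscreteTopology Γ] (x : C₀(Γ, ℝ))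
    (J : Set Γ) : C₀(Γ, ℝ) where
  toFun := J.indicator ⇑x
  continuous_toFun := continuous_of_discreteTopology
  zero_at_infty' := by
    have h : Tendsto (fun γ => ‖x γ‖) (cocompact Γ) (𝓝 0) := by
      rw [← tendsto_zero_iff_norm_tendsto_zero]
      exact zero_at_infty x
    rw [tendsto_zero_iff_norm_tendsto_zero]
    refine squeeze_zero (fun γ => norm_nonneg _) (fun γ => ?_) h
    by_cases hγ : γ ∈ J
    · simp [Set.indicator_of_mem hγ]
    · simp [Set.indicator_of_notMem hγ]

namespace JZaux

open ZeroAtInftyContinuousMap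

variable {Γ : Type*} [TopologicalSpace Γ] [DiscreteTopology Γ]

lemma c0_tendsto (x : C₀(Γ, ℝ)) : Tendsto ⇑x cofinite (𝓝 0) := by
  have h := zero_at_infty x
  rwa [cocompact_eq_cofinite] at h

lemma finite_large (x : C₀(Γ, ℝ)) {ε : ℝ} (hε : 0 < ε) : {γ | ε ≤ |x γ|}.Finite := by
  have h := (c0_tendsto x).eventually (Metric.ball_mem_nhds (0 : ℝ) hε)
  rw [Filter.eventually_cofinite] at h
  refine h.subset fun γ hγ => ?_
  simp only [Set.mem_setOf_eq, Metric.mem_ball, Real.dist_eq, sub_zero, not_lt] at *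
  exact hγ

lemma countable_support (x : C₀(Γ, ℝ)) : {γ | x γ ≠ 0}.Countable := by
  have hsub : {γ | x γ ≠ 0} ⊆ ⋃ n : ℕ, {γ | 1 / ((n : ℝ) + 1) ≤ |x γ|} := by
    intro γ hγ
    obtain ⟨n, hn⟩ := exists_nat_one_div_lt (abs_pos.2 hγ)
    exact Set.mem_iUnion.2 ⟨n, hn.le⟩
  exact (Set.countable_iUnion fun n =>
    (finite_large x (by positivity)).countable).mono hsub

lemma abs_apply_le_norm (f : C₀(Γ, ℝ)) (γ : Γ) : |f γ| ≤ ‖f‖ := by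
  rw [← norm_toBCF_eq_norm]
  simpa [Real.norm_eq_abs] using f.toBCF.norm_coe_le_norm γ

lemma norm_le_of_forall (f : C₀(Γ, ℝ)) {C : ℝ} (hC : 0 ≤ C) (h : ∀ γ, |f γ| ≤ C) :
    ‖f‖ ≤ C := by
  rw [← norm_toBCF_eq_norm]
  exact (BoundedContinuousFunction.norm_le hC).2 fun γ => by
    simpa [Real.norm_eq_abs] using h γ

lemma sum_apply {ι : Type*} (s : Finset ι) (f : ι → C₀(Γ, ℝ)) (γ : Γ) :
    (∑ i ∈ s, f i) γ = ∑ i ∈ s, f i γ := by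
  classical
  induction s using Finset.cons_induction with
  | empty => simp
  | cons a s ha ih =>
    rw [Finset.sum_cons, Finset.sum_cons, ZeroAtInftyContinuousMap.add_apply, ih]

/-- A "request": a finite set of (point, rational value) constraints, a tolerance, a norm
bound, and a finite set where the function should be small. -/
abbrev Req (Γ : Type*) := Finset (Γ × ℚ) × ℚ × ℚ × Finset Γ

def Sat (req : Req Γ) (d : C₀(Γ, ℝ)) : Prop :=
  (∀ p ∈ req.1, |d p.1 - (p.2 : ℝ)| ≤ (req.2.1 : ℝ)) ∧
    (∀ γ ∈ req.2.2.2, |d γ| ≤ (req.2.1 : ℝ)) ∧ ‖d‖ ≤ (req.2.2.1 : ℝ)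

open Classical in
def pick (X : Submodule ℝ C₀(Γ, ℝ)) (req : Req Γ) : C₀(Γ, ℝ) :=
  if h : ∃ d ∈ X, Sat req d then h.choose else 0

lemma pick_mem (X : Submodule ℝ C₀(Γ, ℝ)) (req : Req Γ) : pick X req ∈ X := by
  unfold pick
  split
  · next h => exact h.choose_spec.1
  · exact zero_mem X

lemma pick_sat {X : Submodule ℝ C₀(Γ, ℝ)} {req : Req Γ} (h : ∃ d ∈ X, Sat req d) :
    Sat req (pick X req) := by
  unfold pick
  rw [dif_pos h]
  exact h.choose_spec.2

def Legal (S : Set Γ) (req : Req Γ) : Prop :=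
  (∀ p ∈ req.1, p.1 ∈ S) ∧ ↑req.2.2.2 ⊆ S

lemma legal_countable {S : Set Γ} (hS : S.Countable) :
    {req : Req Γ | Legal S req}.Countable := by
  have hA : {E : Finset (Γ × ℚ) | ∀ p ∈ E, p.1 ∈ S}.Countable := by
    have h1 := Set.countable_setOf_finite_subset (hS.prod (Set.countable_univ (α := ℚ)))
    refine (h1.preimage (f := ((↑) : Finset (Γ × ℚ) → Set (Γ × ℚ)))
      Finset.coe_injective).mono ?_
    intro E hE
    exact ⟨E.finite_toSet, fun p hp => ⟨hE p hp, trivial⟩⟩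
  have hB : {G : Finset Γ | ↑G ⊆ S}.Countable := by
    have h1 := Set.countable_setOf_finite_subset hS
    refine (h1.preimage (f := ((↑) : Finset Γ → Set Γ)) Finset.coe_injective).mono ?_
    intro G hG
    exact ⟨G.finite_toSet, hG⟩
  have hsub : {req : Req Γ | Legal S req} ⊆
      {E : Finset (Γ × ℚ) | ∀ p ∈ E, p.1 ∈ S} ×ˢ (Set.univ ×ˢ (Set.univ ×ˢ
        {G : Finset Γ | ↑G ⊆ S})) := by
    rintro ⟨E, ε, r, G⟩ ⟨h1, h2⟩
    exact ⟨h1, trivial, trivial, h2⟩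
  exact (hA.prod (Set.countable_univ.prod (Set.countable_univ.prod hB))).mono hsub

def nextSet (X : Submodule ℝ C₀(Γ, ℝ)) (S : Set Γ) : Set Γ :=
  S ∪ ⋃ req ∈ {req : Req Γ | Legal S req}, {γ | pick X req γ ≠ 0}

lemma subset_nextSet (X : Submodule ℝ C₀(Γ, ℝ)) (S : Set Γ) : S ⊆ nextSet X S :=
  Set.subset_union_left

lemma nextSet_countable (X : Submodule ℝ C₀(Γ, ℝ)) {S : Set Γ} (hS : S.Countable) :
    (nextSet X S).Countable :=
  hS.union ((legal_countable hS).biUnion fun req _ => countable_support _)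

lemma support_pick_subset (X : Submodule ℝ C₀(Γ, ℝ)) {S : Set Γ} {req : Req Γ}
    (h : Legal S req) : {γ | pick X req γ ≠ 0} ⊆ nextSet X S :=
  fun γ hγ => Or.inr (Set.mem_biUnion h hγ)

end JZaux

/-- Johnson–Zippin claim for `c₀(Γ)`: every countable `I ⊆ Γ` is contained in a countable
`J ⊆ Γ` such that `x·1_J ∈ X` for every `x` in the closed subspace `X`. -/
theorem exists_countable_restriction_invariant_c0 {Γ : Type*} [TopologicalSpace Γ]
    [DiscreteTopology Γ] (X : Submodule ℝ C₀(Γ, ℝ)) (hX : IsClosed (X : Set C₀(Γ, ℝ)))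
    (I : Set Γ) (hI : I.Countable) :
    ∃ J : Set Γ, J.Countable ∧ I ⊆ J ∧ ∀ x ∈ X, c0Restrict x J ∈ X := by
  classical
  set Js : ℕ → Set Γ := fun n => (JZaux.nextSet X)^[n] I with hJsdef
  have hJs_succ : ∀ n, Js (n + 1) = JZaux.nextSet X (Js n) := fun n =>
    Function.iterate_succ_apply' _ n I
  have hJs0 : Js 0 = I := rfl
  have hmono : Monotone Js := monotone_nat_of_le_succ fun n => by
    rw [hJs_succ]; exact JZaux.subset_nextSet X (Js n)
  have hcount : ∀ n, (Js n).Countable := by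
    intro n
    induction n with
    | zero => simpa [hJs0] using hI
    | succ n ih => rw [hJs_succ]; exact JZaux.nextSet_countable X ih
  set J : Set Γ := ⋃ n, Js n with hJdef
  refine ⟨J, Set.countable_iUnion hcount, fun γ hγ => Set.mem_iUnion.2 ⟨0, hγ⟩, ?_⟩
  intro x hx
  show c0Restrict x J ∈ (X : Set C₀(Γ, ℝ))
  rw [← hX.closure_eq, Metric.mem_closure_iff]
  intro ε hε
  obtain ⟨δ, hδ0, hδε⟩ := exists_rat_btwn (show (0 : ℝ) < ε / 5 by linarith)
  have hδpos : (0 : ℝ) < (δ : ℝ) := hδ0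
  -- the finite set where |x| is large, inside J
  have hFfin : ({γ | (δ : ℝ) ≤ |x γ|} ∩ J).Finite :=
    (JZaux.finite_large x hδpos).inter_of_left J
  set F : Finset Γ := hFfin.toFinset with hFdef
  have hmemF : ∀ γ, γ ∈ F ↔ ((δ : ℝ) ≤ |x γ| ∧ γ ∈ J) := by
    intro γ; rw [hFdef, Set.Finite.mem_toFinset]; rfl
  have hFJ : ↑F ⊆ J := fun γ hγ => ((hmemF γ).1 hγ).2
  -- an index n₁ with F ⊆ Js n₁
  obtain ⟨n₁, hFn₁⟩ : ∃ n, ↑F ⊆ Js n := by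
    have hex : ∀ γ : {γ // γ ∈ F}, ∃ n, (γ : Γ) ∈ Js n := fun γ =>
      Set.mem_iUnion.1 (hFJ γ.2)
    choose nf hnf using hex
    refine ⟨Finset.univ.sup nf, fun γ hγ => ?_⟩
    exact hmono (Finset.le_sup (Finset.mem_univ ⟨γ, hγ⟩)) (hnf ⟨γ, hγ⟩)
  -- rational approximations of x and a rational norm bound
  have hq : ∀ γ : Γ, ∃ p : ℚ, |x γ - (p : ℝ)| ≤ (δ : ℝ) := by
    intro γ
    obtain ⟨p, hp1, hp2⟩ := exists_rat_btwn (show x γ - (δ : ℝ) < x γ by linarith)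
    exact ⟨p, by rw [abs_le]; constructor <;> linarith⟩
  choose q hq using hq
  obtain ⟨r, hr⟩ := exists_rat_gt ‖x‖
  have hr0 : (0 : ℝ) ≤ (r : ℝ) := le_of_lt (lt_of_le_of_lt (norm_nonneg x) hr)
  set E : Finset (Γ × ℚ) := F.image (fun γ => (γ, q γ)) with hEdef
  -- the "big set" of a candidate, inside J and off F
  have hTfin : ∀ d : C₀(Γ, ℝ), (({γ | 2 * (δ : ℝ) ≤ |d γ|} ∩ J) \ ↑F).Finite := fun d =>
    (JZaux.finite_large d (by positivity)).subset (fun γ hγ => hγ.1.1)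
  set Tbig : C₀(Γ, ℝ) → Finset Γ := fun d => (hTfin d).toFinset with hTdef
  have hmemT : ∀ d γ, γ ∈ Tbig d ↔ ((2 * (δ : ℝ) ≤ |d γ| ∧ γ ∈ J) ∧ γ ∉ F) := by
    intro d γ; rw [hTdef]; rw [Set.Finite.mem_toFinset]; rfl
  -- the recursive construction
  set G : ℕ → Finset Γ := fun j =>
    Nat.rec (∅ : Finset Γ) (fun _ Gj => Gj ∪ Tbig (JZaux.pick X (E, δ, r, Gj))) j with hGdef
  set d : ℕ → C₀(Γ, ℝ) := fun j => JZaux.pick X (E, δ, r, G j) with hddef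
  have hGsucc : ∀ j, G (j + 1) = G j ∪ Tbig (d j) := fun j => rfl
  have hGmono : ∀ i j, i ≤ j → G i ⊆ G j := by
    intro i j hij
    exact monotone_nat_of_le_succ (f := G)
      (fun n => by rw [hGsucc]; exact Finset.subset_union_left) hij
  -- elements of G j lie in J but off F
  have hGJF : ∀ j, ∀ γ ∈ G j, γ ∈ J ∧ γ ∉ F := by
    intro j
    induction j with
    | zero => intro γ hγ; exact absurd hγ (Finset.notMem_empty γ)
    | succ j ih =>
      intro γ hγ
      rcases Finset.mem_union.1 hγ with h | h
      · exact ih γ h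
      · exact ⟨((hmemT _ γ).1 h).1.2, ((hmemT _ γ).1 h).2⟩
  -- x itself satisfies every request we make
  have hsat : ∀ j, JZaux.Sat (E, δ, r, G j) (d j) := by
    intro j
    apply JZaux.pick_sat
    refine ⟨x, hx, ?_, ?_, le_of_lt hr⟩
    · intro p hp
      obtain ⟨γ, hγF, rfl⟩ := Finset.mem_image.1 hp
      exact hq γ
    · intro γ hγ
      obtain ⟨hγJ, hγF⟩ := hGJF j γ hγ
      by_contra hcon
      exact hγF ((hmemF γ).2 ⟨le_of_not_ge (fun h => hcon (by simpa using h)), hγJ⟩)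
  have hdX : ∀ j, d j ∈ X := fun j => JZaux.pick_mem X _
  -- supports of chosen elements stay in J
  have hGJs : ∀ j, ↑(G j) ⊆ Js (n₁ + j) ∧ {γ | d j γ ≠ 0} ⊆ Js (n₁ + j + 1) := by
    intro j
    induction j with
    | zero =>
      constructor
      · intro γ hγ; exact absurd hγ (Finset.notMem_empty γ)
      · have hlegal : JZaux.Legal (Js (n₁ + 0)) (E, δ, r, G 0) := by
          constructor
          · intro p hp
            obtain ⟨γ, hγF, rfl⟩ := Finset.mem_image.1 hp
            exact hmono (Nat.le_add_right n₁ 0) (hFn₁ hγF)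
          · intro γ hγ; exact absurd hγ (Finset.notMem_empty γ)
        rw [hJs_succ]
        exact JZaux.support_pick_subset X hlegal
    | succ j ih =>
      have hG1 : ↑(G (j + 1)) ⊆ Js (n₁ + (j + 1)) := by
        rw [hGsucc, Finset.coe_union]
        refine Set.union_subset ?_ ?_
        · exact ih.1.trans (hmono (by omega))
        · intro γ hγ
          have hne : d j γ ≠ 0 := by
            have h2 : 2 * (δ : ℝ) ≤ |d j γ| := ((hmemT _ γ).1 hγ).1.1
            intro h0
            rw [h0] at h2
            simp only [abs_zero] at h2
            linarith
          exact ih.2 hne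
      refine ⟨hG1, ?_⟩
      have hlegal : JZaux.Legal (Js (n₁ + (j + 1))) (E, δ, r, G (j + 1)) := by
        constructor
        · intro p hp
          obtain ⟨γ, hγF, rfl⟩ := Finset.mem_image.1 hp
          exact hmono (Nat.le_add_right n₁ _) (hFn₁ hγF)
        · exact hG1
      rw [hJs_succ]
      exact JZaux.support_pick_subset X hlegal
  have hdJ : ∀ j, ∀ γ, γ ∉ J → d j γ = 0 := by
    intro j γ hγ
    by_contra h
    exact hγ (Set.mem_iUnion.2 ⟨n₁ + j + 1, (hGJs j).2 h⟩)
  -- pointwise consequences of Sat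
  have hdF : ∀ j, ∀ γ ∈ F, |d j γ - x γ| ≤ 2 * (δ : ℝ) := by
    intro j γ hγ
    have h1 := (hsat j).1 (γ, q γ) (Finset.mem_image_of_mem _ hγ)
    have h2 := hq γ
    have h3 : |d j γ - x γ| ≤ |d j γ - (q γ : ℝ)| + |(q γ : ℝ) - x γ| := abs_sub_le _ _ _
    rw [abs_sub_comm ((q γ : ℝ)) (x γ)] at h3
    linarith
  have hdG : ∀ j, ∀ γ ∈ G j, |d j γ| ≤ (δ : ℝ) := fun j => (hsat j).2.1
  have hdnorm : ∀ j, ∀ γ, |d j γ| ≤ (r : ℝ) := fun j γ =>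
    (JZaux.abs_apply_le_norm _ γ).trans (hsat j).2.2
  -- the one-bad-index property
  have hkey : ∀ γ, γ ∈ J → γ ∉ F → ∀ i j, i < j → 2 * (δ : ℝ) ≤ |d i γ| →
      |d j γ| ≤ (δ : ℝ) := by
    intro γ hγJ hγF i j hij hbig
    have hT : γ ∈ Tbig (d i) := (hmemT _ γ).2 ⟨⟨hbig, hγJ⟩, hγF⟩
    have hGj : γ ∈ G j := by
      refine hGmono (i + 1) j hij ?_
      rw [hGsucc]
      exact Finset.mem_union_right _ hT
    exact hdG j γ hGj
  -- choose the number of terms to average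
  obtain ⟨k0, hk0⟩ := exists_nat_ge ((r : ℝ) / (δ : ℝ))
  set k : ℕ := max k0 1 with hkdef
  have hk1 : 1 ≤ k := le_max_right _ _
  have hkpos : (0 : ℝ) < (k : ℝ) := by exact_mod_cast hk1
  have hrk : (r : ℝ) / (k : ℝ) ≤ (δ : ℝ) := by
    rw [div_le_iff₀ hkpos]
    have h1 : (r : ℝ) / (δ : ℝ) ≤ (k : ℝ) := hk0.trans (by exact_mod_cast le_max_left k0 1)
    rw [div_le_iff₀ hδpos] at h1
    linarith
  -- the averaged element
  set z : C₀(Γ, ℝ) := (k : ℝ)⁻¹ • ∑ j ∈ Finset.range k, d j with hzdef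
  have hzX : z ∈ X := X.smul_mem _ (Submodule.sum_mem X fun j _ => hdX j)
  refine ⟨z, hzX, ?_⟩
  rw [dist_eq_norm]
  have hzg : ∀ γ, z γ = (k : ℝ)⁻¹ * ∑ j ∈ Finset.range k, d j γ := by
    intro γ
    rw [hzdef, ZeroAtInftyContinuousMap.smul_apply, JZaux.sum_apply]
    simp
  have hbound : ‖c0Restrict x J - z‖ ≤ 4 * (δ : ℝ) := by
    refine JZaux.norm_le_of_forall _ (by positivity) ?_
    intro γ
    have happ : (c0Restrict x J - z) γ = J.indicator (⇑x) γ - z γ := by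
      rw [ZeroAtInftyContinuousMap.sub_apply]; rfl
    rw [happ]
    by_cases hγJ : γ ∈ J
    · rw [Set.indicator_of_mem hγJ]
      by_cases hγF : γ ∈ F
      · -- close to x on F
        have hsum : |∑ j ∈ Finset.range k, (d j γ - x γ)| ≤ (k : ℝ) * (2 * (δ : ℝ)) := by
          calc |∑ j ∈ Finset.range k, (d j γ - x γ)|
              ≤ ∑ j ∈ Finset.range k, |d j γ - x γ| := Finset.abs_sum_le_sum_abs _ _
            _ ≤ ∑ _j ∈ Finset.range k, 2 * (δ : ℝ) :=
                Finset.sum_le_sum fun j _ => hdF j γ hγF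
            _ = (k : ℝ) * (2 * (δ : ℝ)) := by simp [mul_comm]
        have hzx : x γ - z γ = -((k : ℝ)⁻¹ * ∑ j ∈ Finset.range k, (d j γ - x γ)) := by
          rw [hzg γ, Finset.sum_sub_distrib]
          field_simp
          simp only [Finset.sum_const, Finset.card_range, nsmul_eq_mul]
          ring
        rw [hzx, abs_neg, abs_mul, abs_inv, abs_of_pos hkpos]
        calc (k : ℝ)⁻¹ * |∑ j ∈ Finset.range k, (d j γ - x γ)|
            ≤ (k : ℝ)⁻¹ * ((k : ℝ) * (2 * (δ : ℝ))) := by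
              exact mul_le_mul_of_nonneg_left hsum (by positivity)
          _ = 2 * (δ : ℝ) := by field_simp
          _ ≤ 4 * (δ : ℝ) := by linarith
      · -- γ ∈ J \ F : x is small and at most one bad index
        have hxγ : |x γ| ≤ (δ : ℝ) := by
          by_contra hcon
          push_neg at hcon
          exact hγF ((hmemF γ).2 ⟨hcon.le, hγJ⟩)
        have hsum : ∑ j ∈ Finset.range k, |d j γ| ≤ (k : ℝ) * (2 * (δ : ℝ)) + (r : ℝ) := by
          by_cases hbad : ∃ j, 2 * (δ : ℝ) ≤ |d j γ|
          · set i : ℕ := Nat.find hbad with hidef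
            have hterm : ∀ j ∈ Finset.range k,
                |d j γ| ≤ 2 * (δ : ℝ) + (if j = i then (r : ℝ) else 0) := by
              intro j _
              rcases lt_trichotomy j i with hji | hji | hji
              · have := Nat.find_min hbad hji
                rw [if_neg (Nat.ne_of_lt hji)]
                push_neg at this
                linarith [this.le]
              · rw [if_pos hji]
                linarith [hdnorm j γ]
              · rw [if_neg (Nat.ne_of_gt hji)]
                have := hkey γ hγJ hγF i j hji (Nat.find_spec hbad)
                linarith
            calc ∑ j ∈ Finset.range k, |d j γ|
                ≤ ∑ j ∈ Finset.range k, (2 * (δ : ℝ) + (if j = i then (r : ℝ) else 0)) :=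
                  Finset.sum_le_sum hterm
              _ = (k : ℝ) * (2 * (δ : ℝ)) + ∑ j ∈ Finset.range k,
                    (if j = i then (r : ℝ) else 0) := by
                  rw [Finset.sum_add_distrib]
                  simp [mul_comm]
              _ ≤ (k : ℝ) * (2 * (δ : ℝ)) + (r : ℝ) := by
                  rw [Finset.sum_ite_eq' (Finset.range k) i (fun _ => (r : ℝ))]
                  split <;> simp [hr0]
          · push_neg at hbad
            calc ∑ j ∈ Finset.range k, |d j γ|
                ≤ ∑ _j ∈ Finset.range k, 2 * (δ : ℝ) :=
                  Finset.sum_le_sum fun j _ => (hbad j).le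
              _ = (k : ℝ) * (2 * (δ : ℝ)) := by simp [mul_comm]
              _ ≤ (k : ℝ) * (2 * (δ : ℝ)) + (r : ℝ) := by linarith
        have hzabs : |z γ| ≤ 3 * (δ : ℝ) := by
          rw [hzg γ, abs_mul, abs_inv, abs_of_pos hkpos]
          have h1 : |∑ j ∈ Finset.range k, d j γ| ≤ (k : ℝ) * (2 * (δ : ℝ)) + (r : ℝ) :=
            (Finset.abs_sum_le_sum_abs _ _).trans hsum
          calc (k : ℝ)⁻¹ * |∑ j ∈ Finset.range k, d j γ|
              ≤ (k : ℝ)⁻¹ * ((k : ℝ) * (2 * (δ : ℝ)) + (r : ℝ)) :=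
                mul_le_mul_of_nonneg_left h1 (by positivity)
            _ = 2 * (δ : ℝ) + (r : ℝ) / (k : ℝ) := by field_simp
            _ ≤ 3 * (δ : ℝ) := by linarith
        calc |x γ - z γ| ≤ |x γ| + |z γ| := abs_sub _ _
          _ ≤ 4 * (δ : ℝ) := by linarith
    · rw [Set.indicator_of_notMem hγJ]
      have hz0 : z γ = 0 := by
        rw [hzg γ]
        have : ∑ j ∈ Finset.range k, d j γ = 0 :=
          Finset.sum_eq_zero fun j _ => hdJ j γ hγJ
        rw [this, mul_zero]
      rw [hz0, sub_zero, abs_zero]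
      positivity
  linarith [hbound, hδε]

end
end

section
/- Let Γ be a set and let X be a closed linear subspace of ℓ₁(Γ) which is weak*-closed in the following sense: the set {x : Γ → ℝ | x is the underlying function of some element of X of norm ≤ 1} is closed in the product (pointwise convergence) topology on Γ → ℝ. Then there exists a partition 𝒥 of Γ into countable subsets such that for every x ∈ X and every J ∈ 𝒥 the restriction x·1_J belongs to X. -/
open scoped ENNReal
open Filter Topology

noncomputable section

/-- If `f` is in `ℓ_p` then so is its pointwise product with the indicator function of `J`. -/
theorem memℓp_indicator {Γ : Type*} {p : ℝ≥0∞} {f : Γ → ℝ} (hf : Memℓp f p) (J : Set Γ) :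
    Memℓp (J.indicator f) p := by
  rcases p.trichotomy with (rfl | rfl | hp)
  · apply memℓp_zero
    refine hf.finite_dsupport.subset fun i hi => ?_
    simp only [Set.mem_setOf_eq] at hi ⊢
    intro h
    exact hi (by simp [Set.indicator_apply, h])
  · apply memℓp_infty
    obtain ⟨C, hC⟩ := hf.bddAbove
    refine ⟨C, ?_⟩
    rintro - ⟨i, rfl⟩
    by_cases h : i ∈ J
    · simpa [Set.indicator_of_mem h] using hC (Set.mem_range_self i)
    · simp only [Set.indicator_of_notMem h, norm_zero]
      exact le_trans (norm_nonneg (f i)) (hC (Set.mem_range_self i))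
  · apply memℓp_gen
    refine Summable.of_nonneg_of_le (fun i => Real.rpow_nonneg (norm_nonneg _) _)
      (fun i => ?_) (hf.summable hp)
    by_cases h : i ∈ J
    · simp [Set.indicator_of_mem h]
    · simp only [Set.indicator_of_notMem h, norm_zero, Real.zero_rpow hp.ne']
      positivity

/-- `x·1_J`: the element of `ℓ_p(Γ)` whose underlying function is the pointwise product of `x`
with the indicator function of `J`. -/
def lpRestrict {Γ : Type*} {p : ℝ≥0∞} (x : lp (fun _ : Γ => ℝ) p) (J : Set Γ) :
    lp (fun _ : Γ => ℝ) p :=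
  ⟨J.indicator ⇑x, memℓp_indicator (lp.memℓp x) J⟩

theorem lpRestrict_coeFn {Γ : Type*} {p : ℝ≥0∞} (x : lp (fun _ : Γ => ℝ) p) (J : Set Γ) :
    ⇑(lpRestrict x J) = J.indicator ⇑x := rfl

theorem norm_lpRestrict_le {Γ : Type*} (x : lp (fun _ : Γ => ℝ) 1) (J : Set Γ) :
    ‖lpRestrict x J‖ ≤ ‖x‖ := by
  have h1 : (0:ℝ) < (1 : ℝ≥0∞).toReal := by simp
  rw [lp.norm_eq_tsum_rpow h1, lp.norm_eq_tsum_rpow h1]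
  simp only [ENNReal.toReal_one, Real.rpow_one, one_div_one]
  apply Summable.tsum_le_tsum
  · intro γ
    rw [lpRestrict_coeFn]
    by_cases h : γ ∈ J
    · simp [Set.indicator_of_mem h]
    · simp [Set.indicator_of_notMem h]
  · simpa using (lp.memℓp (lpRestrict x J)).summable h1
  · simpa using (lp.memℓp x).summable h1

theorem lpRestrict_compl {Γ : Type*} (x : lp (fun _ : Γ => ℝ) 1) (J : Set Γ) :
    lpRestrict x Jᶜ = x - lpRestrict x J := by
  apply lp.ext
  rw [lp.coeFn_sub, lpRestrict_coeFn, lpRestrict_coeFn, Set.indicator_compl]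

theorem lpRestrict_inter {Γ : Type*} (x : lp (fun _ : Γ => ℝ) 1) (J J' : Set Γ) :
    lpRestrict x (J ∩ J') = lpRestrict (lpRestrict x J') J := by
  apply lp.ext
  rw [lpRestrict_coeFn, lpRestrict_coeFn, lpRestrict_coeFn, Set.indicator_indicator]

theorem mem_of_pointwise_limit {Γ : Type*} (X : Submodule ℝ (lp (fun _ : Γ => ℝ) 1))
    (hweak : IsClosed {f : Γ → ℝ |
      ∃ x : lp (fun _ : Γ => ℝ) 1, x ∈ X ∧ ‖x‖ ≤ 1 ∧ ⇑x = f})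
    {r : ℝ} (hr : 0 < r) (w : ℕ → lp (fun _ : Γ => ℝ) 1)
    (hwX : ∀ n, w n ∈ X) (hwr : ∀ n, ‖w n‖ ≤ r)
    (g : lp (fun _ : Γ => ℝ) 1)
    (hconv : ∀ γ, Tendsto (fun n => w n γ) atTop (𝓝 (g γ))) : g ∈ X := by
  have hmem : ∀ n, (⇑(r⁻¹ • w n) : Γ → ℝ) ∈
      {f : Γ → ℝ | ∃ x : lp (fun _ : Γ => ℝ) 1, x ∈ X ∧ ‖x‖ ≤ 1 ∧ ⇑x = f} := by
    intro n
    refine ⟨r⁻¹ • w n, X.smul_mem _ (hwX n), ?_, rfl⟩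
    rw [norm_smul, Real.norm_eq_abs, abs_of_pos (inv_pos.2 hr)]
    calc r⁻¹ * ‖w n‖ ≤ r⁻¹ * r := by
          have := hwr n
          have h0 : (0:ℝ) ≤ r⁻¹ := le_of_lt (inv_pos.2 hr)
          nlinarith
      _ = 1 := inv_mul_cancel₀ hr.ne'
  have hlim : Tendsto (fun n => (⇑(r⁻¹ • w n) : Γ → ℝ)) atTop (𝓝 (r⁻¹ • ⇑g)) := by
    rw [tendsto_pi_nhds]
    intro γ
    simp only [lp.coeFn_smul, Pi.smul_apply, smul_eq_mul]
    exact (hconv γ).const_mul _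
  obtain ⟨y, hyX, -, hy⟩ := hweak.mem_of_tendsto hlim (Filter.Eventually.of_forall hmem)
  have hg : r • y = g := by
    apply lp.ext
    rw [lp.coeFn_smul, hy, smul_smul, mul_inv_cancel₀ hr.ne', one_smul]
  rw [← hg]
  exact X.smul_mem _ hyX

theorem good_inter {Γ : Type*} (X : Submodule ℝ (lp (fun _ : Γ => ℝ) 1)) {J J' : Set Γ}
    (hJ : ∀ x ∈ X, lpRestrict x J ∈ X) (hJ' : ∀ x ∈ X, lpRestrict x J' ∈ X) :
    ∀ x ∈ X, lpRestrict x (J ∩ J') ∈ X := by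
  intro x hx
  rw [lpRestrict_inter]
  exact hJ _ (hJ' x hx)

theorem good_compl {Γ : Type*} (X : Submodule ℝ (lp (fun _ : Γ => ℝ) 1)) {J : Set Γ}
    (hJ : ∀ x ∈ X, lpRestrict x J ∈ X) :
    ∀ x ∈ X, lpRestrict x Jᶜ ∈ X := by
  intro x hx
  rw [lpRestrict_compl]
  exact X.sub_mem hx (hJ x hx)

theorem good_diff {Γ : Type*} (X : Submodule ℝ (lp (fun _ : Γ => ℝ) 1)) {J J' : Set Γ}
    (hJ : ∀ x ∈ X, lpRestrict x J ∈ X) (hJ' : ∀ x ∈ X, lpRestrict x J' ∈ X) :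
    ∀ x ∈ X, lpRestrict x (J \ J') ∈ X := by
  rw [Set.diff_eq]
  exact good_inter X hJ (good_compl X hJ')

theorem good_iInter {Γ : Type*} (X : Submodule ℝ (lp (fun _ : Γ => ℝ) 1))
    (hweak : IsClosed {f : Γ → ℝ |
      ∃ x : lp (fun _ : Γ => ℝ) 1, x ∈ X ∧ ‖x‖ ≤ 1 ∧ ⇑x = f})
    (A : ℕ → Set Γ) (hA : ∀ n, ∀ x ∈ X, lpRestrict x (A n) ∈ X) :
    ∀ x ∈ X, lpRestrict x (⋂ n, A n) ∈ X := by
  intro x hx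
  set B : ℕ → Set Γ := fun n => ⋂ k ∈ Finset.range (n+1), A k with hBdef
  have hB : ∀ n, lpRestrict x (B n) ∈ X := by
    intro n
    induction n with
    | zero =>
      have h0 : B 0 = A 0 := by simp [hBdef]
      rw [h0]; exact hA 0 x hx
    | succ n ih =>
      have hBe : B (n+1) = A (n+1) ∩ B n := by
        rw [show B (n+1) = ⋂ k ∈ Finset.range (n+1+1), A k from rfl,
          show B n = ⋂ k ∈ Finset.range (n+1), A k from rfl,
          Finset.range_add_one, Finset.set_biInter_insert]
      rw [hBe, lpRestrict_inter]
      exact hA (n+1) _ ih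
  have hconv : ∀ γ, Tendsto (fun n => (lpRestrict x (B n)) γ) atTop
      (𝓝 ((lpRestrict x (⋂ n, A n)) γ)) := by
    intro γ
    by_cases hγ : γ ∈ ⋂ n, A n
    · have h2 : (lpRestrict x (⋂ n, A n)) γ = x γ := by
        rw [lpRestrict_coeFn, Set.indicator_of_mem hγ]
      rw [h2]
      refine Tendsto.congr (fun n => ?_) tendsto_const_nhds
      have hm : γ ∈ B n := by
        simp only [hBdef, Set.mem_iInter]
        intro k _
        exact Set.mem_iInter.1 hγ k
      rw [lpRestrict_coeFn, Set.indicator_of_mem hm]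
    · have h2 : (lpRestrict x (⋂ n, A n)) γ = 0 := by
        rw [lpRestrict_coeFn, Set.indicator_of_notMem hγ]
      rw [h2]
      obtain ⟨m, hm⟩ : ∃ m, γ ∉ A m := by simpa [Set.mem_iInter] using hγ
      refine Tendsto.congr' ?_ (tendsto_const_nhds (x := (0:ℝ)))
      filter_upwards [eventually_ge_atTop m] with n hn
      have hnb : γ ∉ B n := by
        simp only [hBdef, Set.mem_iInter]
        push_neg
        exact ⟨m, Finset.mem_range.2 (Nat.lt_succ_of_le hn), hm⟩
      rw [lpRestrict_coeFn, Set.indicator_of_notMem hnb]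
  exact mem_of_pointwise_limit X hweak (r := ‖x‖ + 1) (by positivity)
    (fun n => lpRestrict x (B n)) hB
    (fun n => le_trans (norm_lpRestrict_le x (B n)) (by linarith [norm_nonneg x]))
    (lpRestrict x (⋂ n, A n)) hconv

theorem exists_countable_good {Γ : Type*} (X : Submodule ℝ (lp (fun _ : Γ => ℝ) 1))
    (hweak : IsClosed {f : Γ → ℝ |
      ∃ x : lp (fun _ : Γ => ℝ) 1, x ∈ X ∧ ‖x‖ ≤ 1 ∧ ⇑x = f})
    (γ₀ : Γ) :
    ∃ C : Set Γ, C.Countable ∧ γ₀ ∈ C ∧ ∀ x ∈ X, lpRestrict x C ∈ X := by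
  classical
  have key : ∀ C : Set Γ, ∃ C' : Set Γ, C.Countable →
      C'.Countable ∧ C ⊆ C' ∧
      ∀ x : lp (fun _ : Γ => ℝ) 1, x ∈ X → ∀ r : ℕ, ‖x‖ ≤ (r : ℝ) →
        ∀ U : Set (C → ℝ), IsOpen U → (fun γ : C => x γ.1) ∈ U →
          ∃ w : lp (fun _ : Γ => ℝ) 1, w ∈ X ∧ ‖w‖ ≤ (r : ℝ) ∧
            (fun γ : C => w γ.1) ∈ U ∧ ∀ γ ∉ C', w γ = 0 := by
    intro C
    by_cases hC : C.Countable
    swap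
    · exact ⟨C, fun h => absurd h hC⟩
    haveI := hC.to_subtype
    have hsep : ∀ r : ℕ, ∃ D : Set (lp (fun _ : Γ => ℝ) 1), D.Countable ∧
        (∀ w ∈ D, w ∈ X ∧ ‖w‖ ≤ (r : ℝ)) ∧
        ∀ x : lp (fun _ : Γ => ℝ) 1, x ∈ X → ‖x‖ ≤ (r : ℝ) →
          ∀ U : Set (C → ℝ), IsOpen U → (fun γ : C => x γ.1) ∈ U →
            ∃ w ∈ D, (fun γ : C => w γ.1) ∈ U := by
      intro r
      set ρ : lp (fun _ : Γ => ℝ) 1 → (C → ℝ) := fun w γ => w γ.1 with hρ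
      set S : Set (C → ℝ) := ρ '' {w | w ∈ X ∧ ‖w‖ ≤ (r : ℝ)} with hS
      obtain ⟨t, htc, htd⟩ := TopologicalSpace.exists_countable_dense ↥S
      have hz : ∀ z : S, ∃ w, (w ∈ X ∧ ‖w‖ ≤ (r : ℝ)) ∧ ρ w = (z : C → ℝ) := fun z => z.2
      choose wit hwit1 hwit2 using hz
      refine ⟨wit '' t, htc.image _, ?_, ?_⟩
      · rintro w ⟨z, hzt, rfl⟩
        exact hwit1 z
      · intro x hxX hxr U hU hxU
        have hxS : (fun γ : C => x γ.1) ∈ S := ⟨x, ⟨hxX, hxr⟩, rfl⟩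
        have hne : (Subtype.val ⁻¹' U : Set S).Nonempty := ⟨⟨_, hxS⟩, hxU⟩
        obtain ⟨z, hz1, hz2⟩ := htd.inter_open_nonempty _
          (hU.preimage continuous_subtype_val) hne
        refine ⟨wit z, ⟨z, hz2, rfl⟩, ?_⟩
        show ρ (wit z) ∈ U
        rw [hwit2 z]
        exact hz1
    choose D hDc hDb hDd using hsep
    refine ⟨C ∪ ⋃ r : ℕ, ⋃ w ∈ D r, {γ | w γ ≠ 0}, fun _ => ⟨?_, Set.subset_union_left, ?_⟩⟩
    · refine hC.union (Set.countable_iUnion fun r => (hDc r).biUnion fun w _ => ?_)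
      have hs : Summable fun γ => ‖(w : Γ → ℝ) γ‖ := by
        simpa using (lp.memℓp w).summable (by simp : (0:ℝ) < (1 : ℝ≥0∞).toReal)
      refine hs.countable_support.mono fun γ hγ => ?_
      simp only [Function.mem_support, Set.mem_setOf_eq] at hγ ⊢
      simpa [norm_eq_zero] using hγ
    · intro x hxX r hxr U hU hxU
      obtain ⟨w, hw, hwU⟩ := hDd r x hxX hxr U hU hxU
      refine ⟨w, (hDb r w hw).1, (hDb r w hw).2, hwU, fun γ hγ => ?_⟩
      by_contra h0
      exact hγ (Or.inr (Set.mem_iUnion.2 ⟨r, Set.mem_iUnion₂.2 ⟨w, hw, h0⟩⟩))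
  choose step hstep using key
  set Cs : ℕ → Set Γ := fun n => n.rec {γ₀} (fun _ C => step C) with hCs
  have hc : ∀ n, (Cs n).Countable := by
    intro n
    induction n with
    | zero => exact Set.countable_singleton γ₀
    | succ n ih => exact (hstep (Cs n) ih).1
  have hsucc : ∀ n, Cs n ⊆ Cs (n+1) := fun n => (hstep (Cs n) (hc n)).2.1
  have hmono : Monotone Cs := monotone_nat_of_le_succ hsucc
  have hγ₀ : γ₀ ∈ ⋃ n, Cs n := Set.mem_iUnion.2 ⟨0, rfl⟩
  refine ⟨⋃ n, Cs n, Set.countable_iUnion hc, hγ₀, ?_⟩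
  intro x hx
  obtain ⟨e, he⟩ := (Set.countable_iUnion hc).exists_eq_range ⟨γ₀, hγ₀⟩
  set R : ℕ := ⌈‖x‖⌉₊ + 1 with hR
  have hxR : ‖x‖ ≤ (R : ℝ) := by
    refine le_trans (Nat.le_ceil _) ?_
    rw [hR]
    push_cast
    linarith
  have hRpos : (0 : ℝ) < R := by positivity
  have hleft : ∀ n : ℕ, ∃ w : lp (fun _ : Γ => ℝ) 1, w ∈ X ∧ ‖w‖ ≤ (R : ℝ) ∧
      (∀ k < n, ∀ h : e k ∈ Cs n, |w (e k) - x (e k)| < 1 / (n + 1)) ∧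
      ∀ γ ∉ Cs (n+1), w γ = 0 := by
    intro n
    set U : Set (Cs n → ℝ) :=
      ⋂ k ∈ Finset.range n,
        {f : Cs n → ℝ | ∀ h : e k ∈ Cs n, |f ⟨e k, h⟩ - x (e k)| < 1 / (n + 1)} with hUdef
    have hUopen : IsOpen U := by
      refine isOpen_biInter_finset fun k _ => ?_
      by_cases h : e k ∈ Cs n
      · have heq : {f : Cs n → ℝ | ∀ h' : e k ∈ Cs n, |f ⟨e k, h'⟩ - x (e k)| < 1 / (n + 1)}
            = (fun f : Cs n → ℝ => f ⟨e k, h⟩) ⁻¹' Metric.ball (x (e k)) (1 / (n + 1)) := by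
          ext f
          simp only [Set.mem_setOf_eq, Set.mem_preimage, Metric.mem_ball, Real.dist_eq]
          exact ⟨fun H => H h, fun H _ => H⟩
        rw [heq]
        exact IsOpen.preimage (continuous_apply (⟨e k, h⟩ : ↥(Cs n))) Metric.isOpen_ball
      · have heq : {f : Cs n → ℝ | ∀ h' : e k ∈ Cs n, |f ⟨e k, h'⟩ - x (e k)| < 1 / (n + 1)}
            = Set.univ := by
          ext f
          simpa using fun h' => absurd h' h
        rw [heq]
        exact isOpen_univ
    have hxU : (fun γ : Cs n => x γ.1) ∈ U := by
      refine Set.mem_iInter₂.2 fun k _ => ?_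
      intro h
      simpa using (by positivity : (0:ℝ) < 1 / (n + 1))
    obtain ⟨w, h1, h2, h3, h4⟩ :=
      (hstep (Cs n) (hc n)).2.2 x hx R hxR U hUopen hxU
    refine ⟨w, h1, h2, fun k hk h => ?_, h4⟩
    exact Set.mem_iInter₂.1 h3 k (Finset.mem_range.2 hk) h
  choose w hw1 hw2 hw3 hw4 using hleft
  have hconv : ∀ γ, Tendsto (fun n => (w n) γ) atTop
      (𝓝 ((lpRestrict x (⋃ n, Cs n)) γ)) := by
    intro γ
    by_cases hγ : γ ∈ ⋃ n, Cs n
    · have h2 : (lpRestrict x (⋃ n, Cs n)) γ = x γ := by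
        rw [lpRestrict_coeFn, Set.indicator_of_mem hγ]
      rw [h2]
      have hγ' := hγ
      rw [he] at hγ'
      obtain ⟨k, rfl⟩ := hγ'
      obtain ⟨m, hm⟩ := Set.mem_iUnion.1 hγ
      rw [Metric.tendsto_atTop]
      intro ε hε
      obtain ⟨N, hN⟩ := exists_nat_gt (1 / ε)
      refine ⟨max (max (k+1) m) N, fun n hn => ?_⟩
      have hkn : k < n := lt_of_lt_of_le (Nat.lt_succ_self k)
        (le_trans (le_trans (le_max_left _ _) (le_max_left _ _)) hn)
      have hmn : m ≤ n := le_trans (le_trans (le_max_right _ _) (le_max_left _ _)) hn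
      have hNn : N ≤ n := le_trans (le_max_right _ _) hn
      have hγn : e k ∈ Cs n := hmono hmn hm
      have hlt := hw3 n k hkn hγn
      rw [Real.dist_eq]
      refine lt_of_lt_of_le hlt ?_
      have hNcast : (N : ℝ) ≤ (n : ℝ) := Nat.cast_le.2 hNn
      rw [div_lt_iff₀ hε] at hN
      rw [div_le_iff₀ (by positivity : (0:ℝ) < (n:ℝ)+1)]
      nlinarith
    · have h2 : (lpRestrict x (⋃ n, Cs n)) γ = 0 := by
        rw [lpRestrict_coeFn, Set.indicator_of_notMem hγ]
      rw [h2]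
      refine Tendsto.congr (fun n => ?_) (tendsto_const_nhds (x := (0:ℝ)))
      exact (hw4 n γ fun hmem => hγ (Set.mem_iUnion.2 ⟨n+1, hmem⟩)).symm
  exact mem_of_pointwise_limit X hweak hRpos w hw1 hw2 (lpRestrict x (⋃ n, Cs n)) hconv

def goodCore {Γ : Type*} (X : Submodule ℝ (lp (fun _ : Γ => ℝ) 1)) (γ : Γ) : Set Γ :=
  ⋂₀ {J : Set Γ | J.Countable ∧ (∀ x ∈ X, lpRestrict x J ∈ X) ∧ γ ∈ J}

theorem mem_goodCore {Γ : Type*} (X : Submodule ℝ (lp (fun _ : Γ => ℝ) 1)) (γ : Γ) :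
    γ ∈ goodCore X γ :=
  Set.mem_sInter.2 fun _ hJ => hJ.2.2

theorem goodCore_subset {Γ : Type*} (X : Submodule ℝ (lp (fun _ : Γ => ℝ) 1)) {γ : Γ}
    {J : Set Γ} (h1 : J.Countable) (h2 : ∀ x ∈ X, lpRestrict x J ∈ X) (h3 : γ ∈ J) :
    goodCore X γ ⊆ J :=
  Set.sInter_subset_of_mem ⟨h1, h2, h3⟩

theorem goodCore_countable {Γ : Type*} (X : Submodule ℝ (lp (fun _ : Γ => ℝ) 1))
    (hweak : IsClosed {f : Γ → ℝ |
      ∃ x : lp (fun _ : Γ => ℝ) 1, x ∈ X ∧ ‖x‖ ≤ 1 ∧ ⇑x = f}) (γ : Γ) :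
    (goodCore X γ).Countable := by
  obtain ⟨K, h1, h3, h2⟩ := exists_countable_good X hweak γ
  exact Set.Countable.mono (goodCore_subset X h1 h2 h3) h1

theorem goodCore_good {Γ : Type*} (X : Submodule ℝ (lp (fun _ : Γ => ℝ) 1))
    (hweak : IsClosed {f : Γ → ℝ |
      ∃ x : lp (fun _ : Γ => ℝ) 1, x ∈ X ∧ ‖x‖ ≤ 1 ∧ ⇑x = f}) (γ : Γ) :
    ∀ x ∈ X, lpRestrict x (goodCore X γ) ∈ X := by
  classical
  obtain ⟨K, hK1, hK3, hK2⟩ := exists_countable_good X hweak γ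
  have hdiff : ∀ δ ∈ K \ goodCore X γ, ∃ J : Set Γ,
      (J.Countable ∧ (∀ x ∈ X, lpRestrict x J ∈ X) ∧ γ ∈ J) ∧ δ ∉ J := by
    intro δ hδ
    have hδ2 := hδ.2
    rw [goodCore, Set.mem_sInter] at hδ2
    push_neg at hδ2
    obtain ⟨J, hJ, hδJ⟩ := hδ2
    exact ⟨J, hJ, hδJ⟩
  choose! Jf hJf hJfn using hdiff
  have hSc : (K \ goodCore X γ).Countable := Set.Countable.mono Set.diff_subset hK1
  have hfamc : (insert K (Jf '' (K \ goodCore X γ))).Countable := (hSc.image Jf).insert K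
  obtain ⟨e, he⟩ := hfamc.exists_eq_range ⟨K, Set.mem_insert _ _⟩
  have hmem_fam : ∀ n, e n ∈ insert K (Jf '' (K \ goodCore X γ)) := fun n => by
    rw [he]; exact Set.mem_range_self n
  have hegood : ∀ n, ∀ x ∈ X, lpRestrict x (e n) ∈ X := by
    intro n
    rcases Set.mem_insert_iff.1 (hmem_fam n) with h | h
    · rw [h]; exact hK2
    · obtain ⟨δ, hδ, hh⟩ := h
      rw [← hh]; exact (hJf δ hδ).2.1
  have hGeq : goodCore X γ = ⋂ n, e n := by
    apply Set.Subset.antisymm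
    · refine Set.subset_iInter fun n => ?_
      rcases Set.mem_insert_iff.1 (hmem_fam n) with h | h
      · rw [h]; exact goodCore_subset X hK1 hK2 hK3
      · obtain ⟨δ, hδ, hh⟩ := h
        rw [← hh]
        exact goodCore_subset X (hJf δ hδ).1 (hJf δ hδ).2.1 (hJf δ hδ).2.2
    · intro δ hδ
      by_contra hδG
      have hδK : δ ∈ K := by
        have hKr : K ∈ Set.range e := by rw [← he]; exact Set.mem_insert _ _
        obtain ⟨n, hn⟩ := hKr
        have := Set.mem_iInter.1 hδ n
        rwa [hn] at this
      have hδS : δ ∈ K \ goodCore X γ := ⟨hδK, hδG⟩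
      have hJr : Jf δ ∈ Set.range e := by
        rw [← he]; exact Set.mem_insert_of_mem _ ⟨δ, hδS, rfl⟩
      obtain ⟨n, hn⟩ := hJr
      have h2 := Set.mem_iInter.1 hδ n
      rw [hn] at h2
      exact hJfn δ hδS h2
  rw [hGeq]
  exact good_iInter X hweak e hegood

theorem goodCore_eq {Γ : Type*} (X : Submodule ℝ (lp (fun _ : Γ => ℝ) 1))
    (hweak : IsClosed {f : Γ → ℝ |
      ∃ x : lp (fun _ : Γ => ℝ) 1, x ∈ X ∧ ‖x‖ ≤ 1 ∧ ⇑x = f})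
    {γ δ : Γ} (hδ : δ ∈ goodCore X γ) : goodCore X δ = goodCore X γ := by
  have h1 : goodCore X δ ⊆ goodCore X γ :=
    goodCore_subset X (goodCore_countable X hweak γ) (goodCore_good X hweak γ) hδ
  have h2 : γ ∈ goodCore X δ := by
    by_contra hn
    have hDgood : ∀ x ∈ X, lpRestrict x (goodCore X γ \ goodCore X δ) ∈ X :=
      good_diff X (goodCore_good X hweak γ) (goodCore_good X hweak δ)
    have hsub := goodCore_subset X
      (Set.Countable.mono Set.diff_subset (goodCore_countable X hweak γ))
      hDgood ⟨mem_goodCore X γ, hn⟩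
    exact (hsub hδ).2 (mem_goodCore X δ)
  exact Set.Subset.antisymm h1
    (goodCore_subset X (goodCore_countable X hweak δ) (goodCore_good X hweak δ) h2)

/-- Every weak*-closed subspace of `ℓ₁(Γ)` is the internal `ℓ₁`-sum, over a partition `𝒥` of
`Γ` into countable subsets, of the subspaces `{x·1_J : x ∈ X}`. Here weak*-closed means that
the set of underlying functions of elements of the unit ball of `X` is closed in the topology
of pointwise convergence on `Γ → ℝ`. -/
theorem weakStarClosed_subspace_l1_decomposition {Γ : Type*}
    (X : Submodule ℝ (lp (fun _ : Γ => ℝ) 1))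
    (hX : IsClosed (X : Set (lp (fun _ : Γ => ℝ) 1)))
    (hweak : IsClosed {f : Γ → ℝ |
      ∃ x : lp (fun _ : Γ => ℝ) 1, x ∈ X ∧ ‖x‖ ≤ 1 ∧ ⇑x = f}) :
    ∃ 𝒥 : Set (Set Γ),
      (∀ J ∈ 𝒥, J.Countable) ∧
      𝒥.PairwiseDisjoint id ∧
      ⋃₀ 𝒥 = Set.univ ∧
      ∀ x ∈ X, ∀ J ∈ 𝒥, lpRestrict x J ∈ X := by
  refine ⟨Set.range (goodCore X), ?_, ?_, ?_, ?_⟩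
  · rintro J ⟨γ, rfl⟩
    exact goodCore_countable X hweak γ
  · intro J hJ J' hJ' hne
    obtain ⟨γ, rfl⟩ := hJ
    obtain ⟨γ', rfl⟩ := hJ'
    have : Disjoint (goodCore X γ) (goodCore X γ') := by
      rw [Set.disjoint_left]
      intro δ h1 h2
      exact hne ((goodCore_eq X hweak h1).symm.trans (goodCore_eq X hweak h2))
    exact this
  · apply Set.eq_univ_of_forall
    intro γ
    exact Set.mem_sUnion.2 ⟨goodCore X γ, Set.mem_range_self γ, mem_goodCore X γ⟩
  · rintro x hx J ⟨γ, rfl⟩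
    exact goodCore_good X hweak γ x hx


end
end

section
/- Let Γ be a set, let ε > 0 and ρ ≥ 0 be real numbers, and let (z_i)_{i∈I} be a family in ℓ₁(Γ) satisfying ‖∑_i λ_i z_i‖ ≥ ε ∑_i |λ_i| for every finitely supported λ : I → ℝ. Let (y_i)_{i∈I} be a family in ℓ₁(Γ) with ‖z_i − y_i‖ ≤ ρ for all i, and let Z be the closed linear span of {z_i} and Y the closed linear span of {y_i}. Then there exists a continuous linear map τ : Z → ℓ₁(Γ) with τ z_i = y_i for all i, ‖τ‖ ≤ 1 + ρ/ε, and ‖z − τ z‖ ≤ (ρ/ε)‖z‖ for all z ∈ Z. Moreover, if ρ < ε then τ is an isomorphism of Z onto Y (τ induces a continuous linear equivalence Z ≃ Y). -/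
open scoped ENNReal

noncomputable section
set_option maxHeartbeats 1000000

/-- The small-perturbation principle in `ℓ₁(Γ)`: if `(z_i)` is `ε`-lower-`ℓ₁` and `(y_i)` is a
`ρ`-perturbation of `(z_i)`, then `z_i ↦ y_i` extends to an operator `τ` on the closed span `Z`
of the `z_i` with `‖τ‖ ≤ 1 + ρ/ε` and `‖z − τ z‖ ≤ (ρ/ε)‖z‖`; if moreover `ρ < ε` then `τ` is
an isomorphism of `Z` onto the closed span `Y` of the `y_i`. -/
theorem perturbation_l1 {Γ I : Type*} (ε ρ : ℝ) (hε : 0 < ε) (hρ : 0 ≤ ρ)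
    (z y : I → lp (fun _ : Γ => ℝ) 1)
    (hz : ∀ l : I →₀ ℝ, ε * ∑ i ∈ l.support, |l i| ≤ ‖∑ i ∈ l.support, l i • z i‖)
    (hy : ∀ i, ‖z i - y i‖ ≤ ρ) :
    ∃ τ : (Submodule.span ℝ (Set.range z)).topologicalClosure →L[ℝ] lp (fun _ : Γ => ℝ) 1,
      (∀ i, τ ⟨z i, (Submodule.span ℝ (Set.range z)).le_topologicalClosure
          (Submodule.subset_span (Set.mem_range_self i))⟩ = y i) ∧
      ‖τ‖ ≤ 1 + ρ / ε ∧
      (∀ w : (Submodule.span ℝ (Set.range z)).topologicalClosure,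
        ‖(w : lp (fun _ : Γ => ℝ) 1) - τ w‖ ≤ (ρ / ε) * ‖w‖) ∧
      (ρ < ε →
        ∃ e : (Submodule.span ℝ (Set.range z)).topologicalClosure ≃L[ℝ]
            (Submodule.span ℝ (Set.range y)).topologicalClosure,
          ∀ w : (Submodule.span ℝ (Set.range z)).topologicalClosure,
            (e w : lp (fun _ : Γ => ℝ) 1) = τ w) := by
  classical
  -- key estimates in terms of `Finsupp.linearCombination`
  have key : ∀ l : I →₀ ℝ,
      ε * ∑ i ∈ l.support, |l i| ≤ ‖Finsupp.linearCombination ℝ z l‖ := by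
    intro l
    simpa [Finsupp.linearCombination_apply, Finsupp.sum] using hz l
  have hdiff : ∀ l : I →₀ ℝ,
      ‖Finsupp.linearCombination ℝ z l - Finsupp.linearCombination ℝ y l‖
        ≤ ρ * ∑ i ∈ l.support, |l i| := by
    intro l
    have h1 : Finsupp.linearCombination ℝ z l - Finsupp.linearCombination ℝ y l
        = ∑ i ∈ l.support, l i • (z i - y i) := by
      simp [Finsupp.linearCombination_apply, Finsupp.sum, smul_sub,
        Finset.sum_sub_distrib]
    rw [h1, Finset.mul_sum]
    refine (norm_sum_le _ _).trans (Finset.sum_le_sum fun i _ => ?_)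
    rw [norm_smul, Real.norm_eq_abs, mul_comm ρ (|l i|)]
    exact mul_le_mul_of_nonneg_left (hy i) (abs_nonneg _)
  have hli : LinearIndependent ℝ z := by
    rw [linearIndependent_iff]
    intro l hl
    have h := key l
    rw [hl, norm_zero] at h
    have hs0 : ∑ i ∈ l.support, |l i| = 0 := by
      have h1 : 0 ≤ ∑ i ∈ l.support, |l i| :=
        Finset.sum_nonneg fun i _ => abs_nonneg _
      nlinarith
    refine Finsupp.ext fun i => ?_
    by_contra hi
    have hmem : i ∈ l.support := Finsupp.mem_support_iff.mpr hi
    have := (Finset.sum_eq_zero_iff_of_nonneg fun i _ => abs_nonneg (l i)).mp hs0 i hmem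
    exact hi (abs_eq_zero.mp this)
  -- the linear map on the span
  set φ₀ : (Submodule.span ℝ (Set.range z)) →ₗ[ℝ] lp (fun _ : Γ => ℝ) 1 :=
    (Finsupp.linearCombination ℝ y).comp hli.repr with hφ₀def
  have hmain : ∀ x : Submodule.span ℝ (Set.range z),
      ‖(x : lp (fun _ : Γ => ℝ) 1) - φ₀ x‖ ≤ (ρ / ε) * ‖(x : lp (fun _ : Γ => ℝ) 1)‖ := by
    intro x
    have h1 : Finsupp.linearCombination ℝ z (hli.repr x) = (x : lp (fun _ : Γ => ℝ) 1) :=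
      hli.linearCombination_repr x
    have h2 := key (hli.repr x)
    have h3 := hdiff (hli.repr x)
    rw [h1] at h2 h3
    have h4 : ‖(x : lp (fun _ : Γ => ℝ) 1) - φ₀ x‖ ≤ ρ * ∑ i ∈ (hli.repr x).support, |(hli.repr x) i| := h3
    refine h4.trans ?_
    rw [div_mul_eq_mul_div, le_div_iff₀ hε]
    nlinarith [mul_le_mul_of_nonneg_left h2 hρ]
  have hφbound : ∀ x : Submodule.span ℝ (Set.range z), ‖φ₀ x‖ ≤ (1 + ρ / ε) * ‖x‖ := by
    intro x
    have h1 := hmain x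
    have h2 : ‖φ₀ x‖ ≤ ‖(x : lp (fun _ : Γ => ℝ) 1)‖ + ‖(x : lp (fun _ : Γ => ℝ) 1) - φ₀ x‖ := by
      calc ‖φ₀ x‖ = ‖(x : lp (fun _ : Γ => ℝ) 1) - ((x : lp (fun _ : Γ => ℝ) 1) - φ₀ x)‖ := by congr 1; abel
        _ ≤ ‖(x : lp (fun _ : Γ => ℝ) 1)‖ + ‖(x : lp (fun _ : Γ => ℝ) 1) - φ₀ x‖ := norm_sub_le _ _
    have hx : ‖x‖ = ‖(x : lp (fun _ : Γ => ℝ) 1)‖ := rfl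
    rw [hx]
    nlinarith [norm_nonneg ((x : lp (fun _ : Γ => ℝ) 1))]
  set φ : (Submodule.span ℝ (Set.range z)) →L[ℝ] lp (fun _ : Γ => ℝ) 1 :=
    LinearMap.mkContinuous φ₀ (1 + ρ / ε) hφbound with hφdef
  -- the inclusion into the closure
  set e : (Submodule.span ℝ (Set.range z)) →L[ℝ]
      (Submodule.span ℝ (Set.range z)).topologicalClosure :=
    { toLinearMap := Submodule.inclusion (Submodule.le_topologicalClosure _)
      cont := continuous_subtype_val.subtype_mk _ } with hedef
  have he_norm : ∀ x : Submodule.span ℝ (Set.range z), ‖e x‖ = ‖x‖ := fun _ => rfl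
  have h_ui : IsUniformInducing e :=
    (AddMonoidHomClass.isometry_of_norm e he_norm).isUniformInducing
  have h_dense : DenseRange e := by
    intro w
    rw [closure_subtype]
    have himg : (Subtype.val '' Set.range e)
        = ((Submodule.span ℝ (Set.range z) : Submodule ℝ (lp (fun _ : Γ => ℝ) 1)) : Set (lp (fun _ : Γ => ℝ) 1)) := by
      ext v
      constructor
      · rintro ⟨_, ⟨x, rfl⟩, rfl⟩; exact x.2
      · intro hv; exact ⟨e ⟨v, hv⟩, ⟨⟨v, hv⟩, rfl⟩, rfl⟩
    rw [himg, ← Submodule.topologicalClosure_coe]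
    exact w.2
  set τ : (Submodule.span ℝ (Set.range z)).topologicalClosure →L[ℝ] lp (fun _ : Γ => ℝ) 1 :=
    φ.extend e with hτdef
  have hτe : ∀ x, τ (e x) = φ x := fun x =>
    ContinuousLinearMap.extend_eq φ h_dense h_ui x
  have hτz : ∀ i, τ ⟨z i, (Submodule.span ℝ (Set.range z)).le_topologicalClosure
      (Submodule.subset_span (Set.mem_range_self i))⟩ = y i := by
    intro i
    have h1 : (⟨z i, (Submodule.span ℝ (Set.range z)).le_topologicalClosure
        (Submodule.subset_span (Set.mem_range_self i))⟩ :
        (Submodule.span ℝ (Set.range z)).topologicalClosure)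
        = e ⟨z i, Submodule.subset_span (Set.mem_range_self i)⟩ := rfl
    rw [h1, hτe]
    show φ₀ _ = y i
    have hr : hli.repr ⟨z i, Submodule.subset_span (Set.mem_range_self i)⟩
        = Finsupp.single i 1 := hli.repr_eq_single i _ rfl
    rw [hφ₀def, LinearMap.comp_apply, hr, Finsupp.linearCombination_single, one_smul]
  have hτnorm : ‖τ‖ ≤ 1 + ρ / ε := by
    have h_e1 : ∀ x : Submodule.span ℝ (Set.range z), ‖x‖ ≤ ((1 : NNReal) : ℝ) * ‖e x‖ := by
      intro x; rw [he_norm x, NNReal.coe_one, one_mul]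
    have h2 : ‖τ‖ ≤ ((1 : NNReal) : ℝ) * ‖φ‖ :=
      ContinuousLinearMap.opNorm_extend_le φ h_dense h_e1
    rw [NNReal.coe_one, one_mul] at h2
    have hεpos : (0 : ℝ) ≤ 1 + ρ / ε := by positivity
    exact h2.trans (LinearMap.mkContinuous_norm_le φ₀ hεpos hφbound)
  have hperp : ∀ w : (Submodule.span ℝ (Set.range z)).topologicalClosure,
      ‖(w : lp (fun _ : Γ => ℝ) 1) - τ w‖ ≤ (ρ / ε) * ‖w‖ := by
    intro w
    refine h_dense.induction_on w ?_ ?_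
    · apply isClosed_le
      · exact (continuous_subtype_val.sub τ.continuous).norm
      · exact continuous_const.mul continuous_norm
    · intro x
      rw [hτe]
      exact hmain x
  refine ⟨τ, hτz, hτnorm, hperp, ?_⟩
  intro hρε
  have hc : 0 < 1 - ρ / ε := by
    have h1 : ρ / ε < 1 := (div_lt_one hε).mpr hρε
    linarith
  have hlow : ∀ w : (Submodule.span ℝ (Set.range z)).topologicalClosure,
      (1 - ρ / ε) * ‖w‖ ≤ ‖τ w‖ := by
    intro w
    have h1 := hperp w
    have h2 : ‖(w : lp (fun _ : Γ => ℝ) 1)‖ - ‖τ w‖ ≤ ‖(w : lp (fun _ : Γ => ℝ) 1) - τ w‖ := norm_sub_norm_le _ _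
    have h3 : ‖w‖ = ‖(w : lp (fun _ : Γ => ℝ) 1)‖ := rfl
    rw [h3] at h1 ⊢
    nlinarith
  set K : NNReal := ⟨(1 - ρ / ε)⁻¹, by positivity⟩ with hKdef
  have hbound : ∀ w : (Submodule.span ℝ (Set.range z)).topologicalClosure,
      ‖w‖ ≤ (K : ℝ) * ‖τ w‖ := by
    intro w
    have h3 := mul_le_mul_of_nonneg_left (hlow w) (inv_nonneg.mpr hc.le)
    rw [← mul_assoc, inv_mul_cancel₀ hc.ne', one_mul] at h3
    exact h3
  have hal : AntilipschitzWith K τ := AddMonoidHomClass.antilipschitz_of_bound τ hbound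
  have hinj : Function.Injective τ := hal.injective
  have hclosed : IsClosed (Set.range τ) := hal.isClosed_range τ.uniformContinuous
  have hrange : LinearMap.range τ.toLinearMap = (Submodule.span ℝ (Set.range y)).topologicalClosure := by
    apply le_antisymm
    · rintro _ ⟨w, rfl⟩
      refine h_dense.induction_on w ?_ ?_
      · exact (Submodule.isClosed_topologicalClosure _).preimage τ.continuous
      · intro x
        show τ (e x) ∈ _
        rw [hτe]
        refine Submodule.le_topologicalClosure _ ?_
        have : φ x = Finsupp.linearCombination ℝ y (hli.repr x) := rfl
        rw [this, ← Finsupp.range_linearCombination]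
        exact ⟨hli.repr x, rfl⟩
    · refine Submodule.topologicalClosure_minimal _ ?_ ?_
      · rw [Submodule.span_le]
        rintro _ ⟨i, rfl⟩
        exact ⟨_, hτz i⟩
      · rw [LinearMap.coe_range]
        exact hclosed
  have hsub : ∀ w : (Submodule.span ℝ (Set.range z)).topologicalClosure,
      τ w ∈ (Submodule.span ℝ (Set.range y)).topologicalClosure := by
    intro w; rw [← hrange]; exact ⟨w, rfl⟩
  set τ' : (Submodule.span ℝ (Set.range z)).topologicalClosure →L[ℝ]
      (Submodule.span ℝ (Set.range y)).topologicalClosure :=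
    τ.codRestrict _ hsub with hτ'def
  have hker : LinearMap.ker τ'.toLinearMap = ⊥ := by
    rw [LinearMap.ker_eq_bot']
    intro m hm
    apply hinj
    have h1 : ((τ' m : (Submodule.span ℝ (Set.range y)).topologicalClosure) : lp (fun _ : Γ => ℝ) 1)
        = (0 : lp (fun _ : Γ => ℝ) 1) := by rw [show τ' m = 0 from hm]; rfl
    rw [ContinuousLinearMap.coe_codRestrict_apply] at h1
    rw [h1, map_zero]
  have hsurj : LinearMap.range τ'.toLinearMap = ⊤ := by
    rw [LinearMap.range_eq_top]
    intro u
    have h1 : (u : lp (fun _ : Γ => ℝ) 1) ∈ LinearMap.range τ.toLinearMap := by rw [hrange]; exact u.2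
    obtain ⟨w, hw⟩ := h1
    exact ⟨w, Subtype.ext (by simpa [hτ'def] using hw)⟩
  refine ⟨ContinuousLinearEquiv.ofBijective τ' hker hsurj, fun w => ?_⟩
  rw [ContinuousLinearEquiv.coeFn_ofBijective]
  simp [hτ'def]

end
end

section
/- Let Γ be a set, let 0 ≤ ρ < ε be real numbers, let (z_i)_{i∈I} be a family in ℓ₁(Γ) satisfying ‖∑_i λ_i z_i‖ ≥ ε ∑_i |λ_i| for every finitely supported λ : I → ℝ, and let (y_i)_{i∈I} satisfy ‖z_i − y_i‖ ≤ ρ for all i. Let Z be the closed linear span of {z_i} and Y the closed linear span of {y_i}, and suppose there is a contractive continuous linear projection P : ℓ₁(Γ) → ℓ₁(Γ) (P ∘ P = P, ‖P‖ ≤ 1) with range Z. Then there exists a continuous linear automorphism T of ℓ₁(Γ) (a continuous linear equivalence ℓ₁(Γ) ≃ ℓ₁(Γ)) such that T z_i = y_i for all i, ‖T − id‖ ≤ ρ/ε, and Y is complemented in ℓ₁(Γ): Y is the range of the continuous linear projection T ∘ P ∘ T⁻¹. -/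
open scoped ENNReal
open Topology
open scoped NNReal

noncomputable section

/-- auxiliary abbreviation for the ambient space -/
abbrev ElAux (Γ : Type*) : Type _ := lp (fun _ : Γ => ℝ) 1

set_option maxHeartbeats 2000000 in
/-- If in the small-perturbation setting the closed span `Z` of `(z_i)` is the range of a
contractive projection `P` on `ℓ₁(Γ)` and `0 ≤ ρ < ε`, then `z_i ↦ y_i` extends to an
automorphism `T` of `ℓ₁(Γ)` with `‖T − id‖ ≤ ρ/ε`, and the closed span `Y` of `(y_i)` is
complemented in `ℓ₁(Γ)`, being the range of the projection `T ∘ P ∘ T⁻¹`. -/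
theorem perturbation_l1_complemented {Γ I : Type*} (ε ρ : ℝ) (hρ : 0 ≤ ρ) (hρε : ρ < ε)
    (z y : I → lp (fun _ : Γ => ℝ) 1)
    (hz : ∀ l : I →₀ ℝ, ε * ∑ i ∈ l.support, |l i| ≤ ‖∑ i ∈ l.support, l i • z i‖)
    (hy : ∀ i, ‖z i - y i‖ ≤ ρ)
    (P : lp (fun _ : Γ => ℝ) 1 →L[ℝ] lp (fun _ : Γ => ℝ) 1)
    (hP : P.comp P = P) (hPnorm : ‖P‖ ≤ 1)
    (hPrange : LinearMap.range (P : lp (fun _ : Γ => ℝ) 1 →ₗ[ℝ] lp (fun _ : Γ => ℝ) 1) = (Submodule.span ℝ (Set.range z)).topologicalClosure) :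
    ∃ T : lp (fun _ : Γ => ℝ) 1 ≃L[ℝ] lp (fun _ : Γ => ℝ) 1,
      (∀ i, T (z i) = y i) ∧
      ‖T.toContinuousLinearMap - ContinuousLinearMap.id ℝ (lp (fun _ : Γ => ℝ) 1)‖ ≤ ρ / ε ∧
      (T.toContinuousLinearMap.comp (P.comp T.symm.toContinuousLinearMap)).comp
          (T.toContinuousLinearMap.comp (P.comp T.symm.toContinuousLinearMap)) =
        T.toContinuousLinearMap.comp (P.comp T.symm.toContinuousLinearMap) ∧
      LinearMap.range ((T.toContinuousLinearMap.comp (P.comp T.symm.toContinuousLinearMap) :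
          lp (fun _ : Γ => ℝ) 1 →ₗ[ℝ] lp (fun _ : Γ => ℝ) 1)) =
        (Submodule.span ℝ (Set.range y)).topologicalClosure := by
  classical
  have hε : (0:ℝ) < ε := lt_of_le_of_lt hρ hρε
  have hρε' : (0:ℝ) ≤ ρ / ε := div_nonneg hρ hε.le
  set L : (I →₀ ℝ) →ₗ[ℝ] ElAux Γ := Finsupp.linearCombination ℝ z with hLdef
  set M : (I →₀ ℝ) →ₗ[ℝ] ElAux Γ := Finsupp.linearCombination ℝ (fun i => y i - z i) with hMdef
  have hLapp : ∀ l : I →₀ ℝ, L l = ∑ i ∈ l.support, l i • z i := fun l => by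
    rw [hLdef, Finsupp.linearCombination_apply, Finsupp.sum]
  have hMapp : ∀ l : I →₀ ℝ, M l = ∑ i ∈ l.support, l i • (y i - z i) := fun l => by
    rw [hMdef, Finsupp.linearCombination_apply, Finsupp.sum]
  have hL : ∀ l : I →₀ ℝ, ε * ∑ i ∈ l.support, |l i| ≤ ‖L l‖ := fun l => by
    rw [hLapp]; exact hz l
  have hMle : ∀ l : I →₀ ℝ, ‖M l‖ ≤ ρ * ∑ i ∈ l.support, |l i| := by
    intro l
    rw [hMapp, Finset.mul_sum]
    refine (norm_sum_le _ _).trans (Finset.sum_le_sum fun i _ => ?_)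
    rw [norm_smul, Real.norm_eq_abs, mul_comm ρ]
    exact mul_le_mul_of_nonneg_left (by rw [norm_sub_rev]; exact hy i) (abs_nonneg _)
  have hMD : ∀ l : I →₀ ℝ, ‖M l‖ ≤ (ρ / ε) * ‖L l‖ := by
    intro l
    calc ‖M l‖ ≤ ρ * ∑ i ∈ l.support, |l i| := hMle l
      _ = (ρ / ε) * (ε * ∑ i ∈ l.support, |l i|) := by
          rw [← mul_assoc, div_mul_cancel₀ ρ hε.ne']
      _ ≤ (ρ / ε) * ‖L l‖ := mul_le_mul_of_nonneg_left (hL l) hρε'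
  have Linj : Function.Injective L := by
    rw [injective_iff_map_eq_zero]
    intro l hl
    have h1 : ε * ∑ i ∈ l.support, |l i| ≤ 0 := by
      have := hL l; rw [hl] at this; simpa using this
    have h2 : ∑ i ∈ l.support, |l i| ≤ 0 := by nlinarith
    have h3 : ∑ i ∈ l.support, |l i| = 0 :=
        le_antisymm h2 (Finset.sum_nonneg fun i _ => abs_nonneg _)
    ext i
    by_contra hi
    have hmem : i ∈ l.support := Finsupp.mem_support_iff.2 hi
    have := (Finset.sum_eq_zero_iff_of_nonneg fun j _ => abs_nonneg (l j)).1 h3 i hmem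
    exact hi (abs_eq_zero.1 this)
  set S : Submodule ℝ (ElAux Γ) := Submodule.span ℝ (Set.range z) with hSdef
  have hrangeL : LinearMap.range L = S := Finsupp.range_linearCombination ..
  set Z : Submodule ℝ (ElAux Γ) := S.topologicalClosure with hZdef
  -- the map `D0 : S →ₗ ElAux Γ` sending `∑ λ_i z_i ↦ ∑ λ_i (y_i - z_i)`
  set eL : (I →₀ ℝ) ≃ₗ[ℝ] LinearMap.range L := LinearEquiv.ofInjective L Linj with heL
  set D0 : S →ₗ[ℝ] ElAux Γ :=
    (M.comp eL.symm.toLinearMap).comp (LinearEquiv.ofEq S (LinearMap.range L)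
      hrangeL.symm).toLinearMap with hD0def
  have hD0 : ∀ (l : I →₀ ℝ) (h : L l ∈ S), D0 ⟨L l, h⟩ = M l := by
    intro l h
    have h1 : (LinearEquiv.ofEq S (LinearMap.range L) hrangeL.symm) ⟨L l, h⟩
        = ⟨L l, LinearMap.mem_range_self L l⟩ := rfl
    have h2 : eL.symm ⟨L l, LinearMap.mem_range_self L l⟩ = l := by
      rw [LinearEquiv.symm_apply_eq]
      exact Subtype.ext (LinearEquiv.ofInjective_apply L l).symm
    simp [hD0def, h1, h2]
  have hD0norm : ∀ v : S, ‖D0 v‖ ≤ (ρ / ε) * ‖v‖ := by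
    rintro ⟨v, hv⟩
    have hv' : v ∈ LinearMap.range L := by rw [hrangeL]; exact hv
    obtain ⟨l, rfl⟩ := hv'
    rw [hD0 l hv]
    exact (hMD l).trans (le_of_eq rfl)
  set D0c : S →L[ℝ] ElAux Γ := D0.mkContinuous (ρ / ε) hD0norm with hD0cdef
  have hD0cnorm : ‖D0c‖ ≤ ρ / ε := LinearMap.mkContinuous_norm_le D0 hρε' hD0norm
  -- the inclusion of `S` into its closure `Z`
  set j : S →L[ℝ] Z :=
    { toLinearMap := Submodule.inclusion S.le_topologicalClosure
      cont := continuous_subtype_val.subtype_mk _ } with hjdef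
  have hjbound : ∀ x : S, ‖x‖ ≤ ((1:ℝ≥0) : ℝ) * ‖j x‖ := fun x => by
    simp only [NNReal.coe_one, one_mul]; rfl
  have hjdense : DenseRange j := by
    refine IsInducing.subtypeVal.dense_iff.2 fun x => ?_
    have hx : (x : ElAux Γ) ∈ closure (S : Set (ElAux Γ)) := by
      rw [← Submodule.topologicalClosure_coe]; exact x.2
    convert hx using 2
    rw [← Set.range_comp]
    exact Set.ext fun v =>
      ⟨by rintro ⟨w, rfl⟩; exact w.2, fun hv => ⟨⟨v, hv⟩, rfl⟩⟩
  set Dext : Z →L[ℝ] ElAux Γ :=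
    D0c.extend j
    with hDextdef
  have hDextnorm : ‖Dext‖ ≤ (1:ℝ≥0) * ‖D0c‖ :=
    ContinuousLinearMap.opNorm_extend_le D0c hjdense hjbound
  have hDext_eq : ∀ s : S, Dext (j s) = D0c s := fun s =>
    ContinuousLinearMap.extend_eq D0c hjdense
      (ContinuousLinearMap.isUniformEmbedding_of_bound j hjbound).isUniformInducing s
  -- the perturbation `Dfull = Dext ∘ (P corestricted to Z)`
  have hPZ : ∀ x : ElAux Γ, P x ∈ Z := fun x => by
    rw [← hPrange]; exact LinearMap.mem_range_self (P : lp (fun _ : Γ => ℝ) 1 →ₗ[ℝ] lp (fun _ : Γ => ℝ) 1) x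
  set Q : ElAux Γ →L[ℝ] Z := P.codRestrict Z hPZ with hQdef
  set Dfull : ElAux Γ →L[ℝ] ElAux Γ := Dext.comp Q with hDfulldef
  have hDfullnorm : ‖Dfull‖ ≤ ρ / ε := by
    refine ContinuousLinearMap.opNorm_le_bound _ hρε' fun x => ?_
    have h1 : ‖Dfull x‖ ≤ ‖Dext‖ * ‖Q x‖ := Dext.le_opNorm (Q x)
    have h2 : ‖Q x‖ = ‖P x‖ := rfl
    have h3 : ‖P x‖ ≤ ‖x‖ := by
      calc ‖P x‖ ≤ ‖P‖ * ‖x‖ := P.le_opNorm x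
        _ ≤ 1 * ‖x‖ := mul_le_mul_of_nonneg_right hPnorm (norm_nonneg x)
        _ = ‖x‖ := one_mul _
    have h4 : ‖Dext‖ ≤ ρ / ε := by
      calc ‖Dext‖ ≤ (1:ℝ≥0) * ‖D0c‖ := hDextnorm
        _ = ‖D0c‖ := by simp
        _ ≤ ρ / ε := hD0cnorm
    calc ‖Dfull x‖ ≤ ‖Dext‖ * ‖Q x‖ := h1
      _ ≤ (ρ / ε) * ‖x‖ := by
          rw [h2]
          exact mul_le_mul h4 h3 (norm_nonneg _) hρε'
  -- the automorphism `T = 1 + Dfull`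
  have hlt : ‖-Dfull‖ < 1 := by
    rw [norm_neg]
    exact lt_of_le_of_lt hDfullnorm ((div_lt_one hε).2 hρε)
  set u : (ElAux Γ →L[ℝ] ElAux Γ)ˣ := Units.oneSub (-Dfull) hlt with hudef
  have huval : (u : ElAux Γ →L[ℝ] ElAux Γ) = 1 + Dfull := by
    rw [hudef]; show 1 - -Dfull = 1 + Dfull; rw [sub_neg_eq_add]
  set T : ElAux Γ ≃L[ℝ] ElAux Γ := ContinuousLinearEquiv.ofUnit u with hTdef
  have hTcoe : T.toContinuousLinearMap = 1 + Dfull := by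
    rw [← huval]; rfl
  have hTapp : ∀ x : ElAux Γ, T x = x + Dfull x := by
    intro x
    have : T x = T.toContinuousLinearMap x := rfl
    rw [this, hTcoe]
    rfl
  -- `P` fixes elements of `Z`
  have hPP : ∀ v : ElAux Γ, P (P v) = P v := fun v => DFunLike.congr_fun hP v
  have hPfix : ∀ w : ElAux Γ, w ∈ Z → P w = w := by
    intro w hw
    have : w ∈ LinearMap.range (P : lp (fun _ : Γ => ℝ) 1 →ₗ[ℝ] lp (fun _ : Γ => ℝ) 1) := by rw [hPrange]; exact hw
    obtain ⟨v, rfl⟩ := this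
    exact hPP v
  -- `T z i = y i`
  have hTz : ∀ i, T (z i) = y i := by
    intro i
    have hziS : z i ∈ S := Submodule.subset_span ⟨i, rfl⟩
    have hziZ : z i ∈ Z := S.le_topologicalClosure hziS
    have hQzi : Q (z i) = j ⟨z i, hziS⟩ := by
      apply Subtype.ext
      show P (z i) = z i
      exact hPfix _ hziZ
    have hLsingle : L (Finsupp.single i 1) = z i := by
      rw [hLdef, Finsupp.linearCombination_single, one_smul]
    have hMsingle : M (Finsupp.single i 1) = y i - z i := by
      rw [hMdef, Finsupp.linearCombination_single, one_smul]
    have hD0zi : D0 ⟨z i, hziS⟩ = y i - z i := by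
      have h1 : (⟨z i, hziS⟩ : S) = ⟨L (Finsupp.single i 1), hLsingle ▸ hziS⟩ :=
        Subtype.ext hLsingle.symm
      rw [h1, hD0, hMsingle]
    have hDfullzi : Dfull (z i) = y i - z i := by
      rw [hDfulldef]
      show Dext (Q (z i)) = y i - z i
      rw [hQzi, hDext_eq]
      show D0 ⟨z i, hziS⟩ = y i - z i
      exact hD0zi
    rw [hTapp, hDfullzi]
    abel
  refine ⟨T, hTz, ?_, ?_, ?_⟩
  · -- norm estimate
    have : T.toContinuousLinearMap - ContinuousLinearMap.id ℝ (ElAux Γ) = Dfull := by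
      rw [hTcoe]
      have h1 : (1 : ElAux Γ →L[ℝ] ElAux Γ) = ContinuousLinearMap.id ℝ (ElAux Γ) := rfl
      rw [← h1, add_sub_cancel_left]
    rw [this]
    exact hDfullnorm
  · -- projection
    refine ContinuousLinearMap.ext fun x => ?_
    simp only [ContinuousLinearMap.comp_apply, ContinuousLinearEquiv.coe_coe,
      ContinuousLinearEquiv.symm_apply_apply]
    exact congrArg _ (hPP _)
  · -- range
    apply SetLike.coe_injective
    have himg : ⇑T '' Set.range z = Set.range y := by
      rw [← Set.range_comp]
      exact congrArg Set.range (funext hTz)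
    have hstep1 : (LinearMap.range ((T.toContinuousLinearMap.comp
        (P.comp T.symm.toContinuousLinearMap) : ElAux Γ →ₗ[ℝ] ElAux Γ)) : Set (ElAux Γ)) = ⇑T '' (Z : Set (ElAux Γ)) := by
      ext v
      constructor
      · rintro ⟨x, rfl⟩
        exact ⟨P (T.symm x), hPZ _, rfl⟩
      · rintro ⟨w, hw, rfl⟩
        have hw' : w ∈ LinearMap.range (P : lp (fun _ : Γ => ℝ) 1 →ₗ[ℝ] lp (fun _ : Γ => ℝ) 1) := by rw [hPrange]; exact hw
        obtain ⟨v', rfl⟩ := hw'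
        refine ⟨T v', ?_⟩
        show T (P (T.symm (T v'))) = T (P v')
        rw [T.symm_apply_apply]
    have hstep2 : Submodule.map (T.toContinuousLinearMap : ElAux Γ →ₗ[ℝ] ElAux Γ) S
        = Submodule.span ℝ (Set.range y) := by
      rw [hSdef, Submodule.map_span]
      exact congrArg _ (by rw [← himg]; rfl)
    calc (LinearMap.range ((T.toContinuousLinearMap.comp
          (P.comp T.symm.toContinuousLinearMap) : ElAux Γ →ₗ[ℝ] ElAux Γ)) : Set (ElAux Γ))
        = ⇑T '' (Z : Set (ElAux Γ)) := hstep1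
      _ = ⇑T '' closure (S : Set (ElAux Γ)) := by rw [hZdef, Submodule.topologicalClosure_coe]
      _ = closure (⇑T '' (S : Set (ElAux Γ))) := T.toHomeomorph.image_closure _
      _ = closure ((Submodule.span ℝ (Set.range y) : Set (ElAux Γ))) := by
          rw [← hstep2]
          rfl
      _ = ((Submodule.span ℝ (Set.range y)).topologicalClosure : Set (ElAux Γ)) :=
          (Submodule.topologicalClosure_coe _).symm

end
end

section
/- Let Γ be a set and let X be a closed linear subspace of ℓ₁(Γ) whose density character κ = dens(X) has uncountable cofinality (for instance, κ is an uncountable regular cardinal) and satisfies κ < |Γ|. Then there exists ε > 0 such that for every subset I ⊆ Γ with |I| < κ there is an x ∈ X with ‖x‖ = 1 and ‖x·1_{Γ∖I}‖ > ε. -/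
open scoped ENNReal

noncomputable section

/-- The density character of a topological space: the least cardinality of a dense subset. -/
def densChar (X : Type u) [TopologicalSpace X] : Cardinal.{u} :=
  sInf { c : Cardinal | ∃ s : Set X, Dense s ∧ Cardinal.mk s = c }


/-! ### Auxiliary lemmas -/

lemma l1_hasSum {Γ : Type*} (f : lp (fun _ : Γ => ℝ) 1) :
    HasSum (fun γ => ‖f γ‖) ‖f‖ := by
  have := lp.hasSum_norm (p := 1) (E := fun _ : Γ => ℝ) (by norm_num) f
  simpa using this

lemma lpRestrict_mono {Γ : Type*} (x : lp (fun _ : Γ => ℝ) 1) {A B : Set Γ}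
    (hAB : A ⊆ B) : ‖lpRestrict x A‖ ≤ ‖lpRestrict x B‖ := by
  refine hasSum_le (fun γ => ?_) (l1_hasSum _) (l1_hasSum _)
  show ‖A.indicator ⇑x γ‖ ≤ ‖B.indicator ⇑x γ‖
  by_cases h : γ ∈ A
  · rw [Set.indicator_of_mem h, Set.indicator_of_mem (hAB h)]
  · rw [Set.indicator_of_notMem h]; simp

open Classical in
/-- An element of `ℓ₁(Γ)` determined by a finitely supported rational function on `J`. -/
def lpOfFinsupp {Γ : Type u} (J : Set Γ) (c : ↥J →₀ ℚ) : lp (fun _ : Γ => ℝ) 1 :=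
  ⟨fun γ => if h : γ ∈ J then ((c ⟨γ, h⟩ : ℚ) : ℝ) else 0, by
    apply memℓp_gen
    apply summable_of_ne_finset_zero (s := c.support.image Subtype.val)
    intro γ hγ
    simp only [ENNReal.toReal_one, Real.rpow_one, norm_eq_zero]
    by_cases h : γ ∈ J
    · rw [dif_pos h]
      norm_cast
      by_contra hne
      exact hγ (Finset.mem_image.2 ⟨⟨γ, h⟩, Finsupp.mem_support_iff.2 hne, rfl⟩)
    · rw [dif_neg h]⟩

open Classical in
lemma lpOfFinsupp_apply {Γ : Type u} (J : Set Γ) (c : ↥J →₀ ℚ) (γ : Γ) :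
    lpOfFinsupp J c γ = if h : γ ∈ J then ((c ⟨γ, h⟩ : ℚ) : ℝ) else 0 := rfl

lemma l1_approx {Γ : Type u} (J : Set Γ) (x : lp (fun _ : Γ => ℝ) 1)
    (hsupp : ∀ γ ∉ J, x γ = 0) {ε : ℝ} (hε : 0 < ε) :
    ∃ c : ↥J →₀ ℚ, ‖x - lpOfFinsupp J c‖ < ε := by
  classical
  have hsum : Summable fun γ => ‖x γ‖ := (l1_hasSum x).summable
  obtain ⟨F0, hF0⟩ : ∃ F0 : Finset Γ, ∑' γ : { γ // γ ∉ F0 }, ‖x γ‖ < ε / 2 :=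
    ((tendsto_order.1 (tendsto_tsum_compl_atTop_zero fun γ => ‖x γ‖)).2 _
      (half_pos hε)).exists
  set F : Finset Γ := F0.filter (· ∈ J) with hF
  have hFJ : ∀ γ ∈ F, γ ∈ J := fun γ hγ => (Finset.mem_filter.1 hγ).2
  have hsums : ∑ γ ∈ F, ‖x γ‖ = ∑ γ ∈ F0, ‖x γ‖ := by
    refine Finset.sum_filter_of_ne fun γ _ hne => ?_
    by_contra h
    exact hne (by rw [hsupp γ h, norm_zero])
  have htailF : ∑' γ : { γ // γ ∉ F }, ‖x γ‖ < ε / 2 := by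
    have h1 := hsum.sum_add_tsum_subtype_compl F
    have h2 := hsum.sum_add_tsum_subtype_compl F0
    linarith
  set δ : ℝ := ε / (2 * (F.card + 1)) with hδdef
  have hδ : 0 < δ := by positivity
  choose q hq using fun γ : Γ => exists_rat_near (x γ) hδ
  have hcsupp : ∀ j : ↥J, (if (j : Γ) ∈ F then q j else 0) ≠ 0 → j ∈ F.subtype (· ∈ J) := by
    intro j hj
    rw [Finset.mem_subtype]
    by_contra h
    exact hj (if_neg h)
  set c : ↥J →₀ ℚ := Finsupp.onFinset (F.subtype (· ∈ J))
    (fun j => if (j : Γ) ∈ F then q j else 0) hcsupp with hcdef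
  refine ⟨c, ?_⟩
  · set y := x - lpOfFinsupp J c with hy
    have hyval : ∀ γ : Γ, y γ = x γ - (if γ ∈ F then (q γ : ℝ) else 0) := by
      intro γ
      have : y γ = x γ - lpOfFinsupp J c γ := by
        rw [hy, lp.coeFn_sub, Pi.sub_apply]
      rw [this, lpOfFinsupp_apply, hcdef]
      by_cases h : γ ∈ J
      · rw [dif_pos h, Finsupp.onFinset_apply]
        by_cases hF' : γ ∈ F
        · rw [if_pos hF', if_pos hF']
        · rw [if_neg hF', if_neg hF']
          norm_num
      · rw [dif_neg h, if_neg (fun hF' => h (hFJ γ hF'))]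
    have hysum : Summable fun γ => ‖y γ‖ := (l1_hasSum y).summable
    have hnorm : ‖y‖ = ∑ γ ∈ F, ‖y γ‖ + ∑' γ : { γ // γ ∉ F }, ‖y γ‖ :=
      ((l1_hasSum y).tsum_eq.symm).trans (hysum.sum_add_tsum_subtype_compl F).symm
    have hb1 : ∑ γ ∈ F, ‖y γ‖ < ε / 2 := by
      have : ∑ γ ∈ F, ‖y γ‖ ≤ F.card • δ := by
        refine Finset.sum_le_card_nsmul _ _ _ fun γ hγ => ?_
        rw [hyval γ, if_pos hγ]
        exact le_of_lt (hq γ)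
      refine lt_of_le_of_lt this ?_
      rw [nsmul_eq_mul, hδdef, mul_div_assoc', div_lt_div_iff₀ (by positivity) (by norm_num)]
      have hc : (0:ℝ) ≤ (F.card : ℝ) := Nat.cast_nonneg _
      nlinarith
    have hb2 : ∑' γ : { γ // γ ∉ F }, ‖y γ‖ < ε / 2 := by
      refine lt_of_le_of_lt (le_of_eq (tsum_congr fun γ => ?_)) htailF
      rw [hyval γ.1, if_neg γ.2, sub_zero]
    calc ‖y‖ = ∑ γ ∈ F, ‖y γ‖ + ∑' γ : { γ // γ ∉ F }, ‖y γ‖ := hnorm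
    _ < ε / 2 + ε / 2 := add_lt_add hb1 hb2
    _ = ε := by ring

/-- If `X` is a closed subspace of `ℓ₁(Γ)` whose density character `κ` has uncountable
cofinality and satisfies `κ < |Γ|`, then there is `ε > 0` such that for every `I ⊆ Γ` with
`|I| < κ` some normalized `x ∈ X` has `‖x·1_{Γ∖I}‖ > ε`. -/
theorem exists_uniform_tail_l1 {Γ : Type u}
    (X : Submodule ℝ (lp (fun _ : Γ => ℝ) 1))
    (hX : IsClosed (X : Set (lp (fun _ : Γ => ℝ) 1)))
    (κ : Cardinal.{u}) (hκ : densChar X = κ)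
    (hcof : Cardinal.aleph0 < (Cardinal.ord κ).cof)
    (hκΓ : κ < Cardinal.mk Γ) :
    ∃ ε : ℝ, 0 < ε ∧
      ∀ I : Set Γ, Cardinal.mk I < κ →
        ∃ x : lp (fun _ : Γ => ℝ) 1, x ∈ X ∧ ‖x‖ = 1 ∧ ε < ‖lpRestrict x Iᶜ‖ := by
  classical
  by_contra hcon
  push_neg at hcon
  choose I hIκ hI using fun n : ℕ => hcon (1 / (n + 1)) (by positivity)
  set J : Set Γ := ⋃ m : ULift.{u} ℕ, I m.down with hJdef
  have hℵ₀κ : Cardinal.aleph0 < κ := lt_of_lt_of_le hcof (Ordinal.cof_ord_le κ)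
  have hmkU : Cardinal.mk (ULift.{u} ℕ) = Cardinal.aleph0 := Cardinal.mk_eq_aleph0 _
  have hJκ : Cardinal.mk J < κ := by
    refine lt_of_le_of_lt (Cardinal.mk_iUnion_le _) ?_
    rw [hmkU]
    refine Cardinal.mul_lt_of_lt hℵ₀κ.le hℵ₀κ ?_
    refine Ordinal.iSup_lt ?_ (fun m => hIκ m.down)
    rw [hmkU]; exact hcof
  have hsupp : ∀ x : lp (fun _ : Γ => ℝ) 1, x ∈ X → ∀ γ, γ ∉ J → x γ = 0 := by
    have key : ∀ x : lp (fun _ : Γ => ℝ) 1, x ∈ X → ‖x‖ = 1 → lpRestrict x Jᶜ = 0 := by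
      intro x hx hnx
      have hle : ∀ n : ℕ, ‖lpRestrict x Jᶜ‖ ≤ 1 / (n + 1) := by
        intro n
        refine le_trans (lpRestrict_mono x ?_) (hI n x hx hnx)
        exact Set.compl_subset_compl.2
          (Set.subset_iUnion (fun m : ULift.{u} ℕ => I m.down) (ULift.up n))
      have h0 : ‖lpRestrict x Jᶜ‖ ≤ 0 := by
        by_contra h
        push_neg at h
        obtain ⟨n, hn⟩ := exists_nat_one_div_lt h
        exact absurd (hle n) (not_le.2 hn)
      exact norm_eq_zero.1 (le_antisymm h0 (norm_nonneg _))
    intro x hx γ hγ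
    by_cases hx0 : x = 0
    · rw [hx0]
      exact congrFun (lp.coeFn_zero (fun _ : Γ => ℝ) 1) γ
    · have hy1 : ‖(‖x‖⁻¹ : ℝ) • x‖ = 1 := norm_smul_inv_norm hx0
      have hyX : (‖x‖⁻¹ : ℝ) • x ∈ X := X.smul_mem _ hx
      have h := key _ hyX hy1
      have h2 : (Jᶜ).indicator (⇑((‖x‖⁻¹ : ℝ) • x)) γ = 0 := by
        have := congrArg (fun z : lp (fun _ : Γ => ℝ) 1 => (z : Γ → ℝ) γ) h
        simpa [lpRestrict] using this
      rw [Set.indicator_of_mem (Set.mem_compl hγ), lp.coeFn_smul, Pi.smul_apply,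
        smul_eq_mul] at h2
      have hxn : (‖x‖ : ℝ)⁻¹ ≠ 0 := inv_ne_zero (norm_ne_zero_iff.2 hx0)
      exact (mul_eq_zero.1 h2).resolve_left hxn
  have hXne : (X : Set (lp (fun _ : Γ => ℝ) 1)).Nonempty := ⟨0, X.zero_mem⟩
  have hTex : ∀ (c : ↥J →₀ ℚ) (n : ℕ), ∃ y : ↥X,
      dist (lpOfFinsupp J c) (y : lp (fun _ : Γ => ℝ) 1)
        < Metric.infDist (lpOfFinsupp J c) (X : Set (lp (fun _ : Γ => ℝ) 1)) + 1 / (n + 1) := by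
    intro c n
    obtain ⟨y, hyX, hy⟩ := (Metric.infDist_lt_iff hXne).1
      (lt_add_of_pos_right _ (by positivity : (0:ℝ) < 1 / (n + 1)))
    exact ⟨⟨y, hyX⟩, hy⟩
  choose T hT using hTex
  have hdense : DenseRange (fun p : (↥J →₀ ℚ) × ℕ => T p.1 p.2) := by
    rw [Metric.denseRange_iff]
    rintro ⟨x, hx⟩ r hr
    obtain ⟨c, hc⟩ := l1_approx J x (hsupp x hx) (by positivity : (0:ℝ) < r / 3)
    obtain ⟨n, hn⟩ := exists_nat_one_div_lt (show (0:ℝ) < r / 3 by positivity)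
    refine ⟨(c, n), ?_⟩
    have hd1 : dist x (lpOfFinsupp J c) < r / 3 := by rw [dist_eq_norm]; exact hc
    have hd2 : Metric.infDist (lpOfFinsupp J c) (X : Set (lp (fun _ : Γ => ℝ) 1))
        ≤ dist x (lpOfFinsupp J c) := by
      rw [dist_comm]
      exact Metric.infDist_le_dist_of_mem hx
    have hd3 := hT c n
    have htri : dist (⟨x, hx⟩ : ↥X) (T c n)
        ≤ dist x (lpOfFinsupp J c) + dist (lpOfFinsupp J c) (T c n : lp (fun _ : Γ => ℝ) 1) := by
      rw [Subtype.dist_eq]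
      exact dist_triangle _ _ _
    refine lt_of_le_of_lt htri ?_
    linarith
  have h1 : densChar ↥X ≤ Cardinal.mk (Set.range (fun p : (↥J →₀ ℚ) × ℕ => T p.1 p.2)) :=
    csInf_le' ⟨_, hdense, rfl⟩
  have h2 : Cardinal.mk (Set.range (fun p : (↥J →₀ ℚ) × ℕ => T p.1 p.2))
      ≤ Cardinal.mk ((↥J →₀ ℚ) × ℕ) := Cardinal.mk_range_le
  have hJQ : Cardinal.mk (↥J × ℚ) < κ := by
    rw [Cardinal.mk_prod, Cardinal.lift_uzero, Cardinal.mkRat, Cardinal.lift_aleph0]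
    exact Cardinal.mul_lt_of_lt hℵ₀κ.le hJκ hℵ₀κ
  have hfin : Cardinal.mk (↥J →₀ ℚ) < κ := by
    calc Cardinal.mk (↥J →₀ ℚ) ≤ Cardinal.mk (Finset (↥J × ℚ)) :=
          Cardinal.mk_le_of_injective (Finsupp.graph_injective _ _)
    _ ≤ Cardinal.mk (List (↥J × ℚ)) := Cardinal.mk_le_of_surjective List.toFinset_surjective
    _ ≤ max Cardinal.aleph0 (Cardinal.mk (↥J × ℚ)) := Cardinal.mk_list_le_max _
    _ < κ := max_lt hℵ₀κ hJQ
  have hι : Cardinal.mk ((↥J →₀ ℚ) × ℕ) < κ := by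
    rw [Cardinal.mk_prod, Cardinal.lift_uzero, Cardinal.mk_nat, Cardinal.lift_aleph0]
    exact Cardinal.mul_lt_of_lt hℵ₀κ.le hfin hℵ₀κ
  have hlt : κ < κ := by
    calc κ = densChar ↥X := hκ.symm
    _ ≤ _ := h1
    _ ≤ _ := h2
    _ < κ := hι
  exact absurd hlt (lt_irrefl κ)


end
end

section
/- Let X be a Banach space with the separable complementation property whose density character equals ℵ₁. Then there exist a well-ordered index type ι of cardinality ℵ₁ in which every proper initial segment {j : j < i} is countable, and a monotone (increasing) family (X_i)_{i∈ι} of closed linear subspaces of X such that each X_i is separable, each X_i is the range of a continuous linear projection on X, and X = ⋃_{i∈ι} X_i. -/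
open scoped ENNReal

noncomputable section

/-- A Banach space `X` has the separable complementation property (SCP) if every separable
closed subspace of `X` is contained in a separable closed subspace that is the range of a
continuous linear projection on `X`. -/
def HasSCP (X : Type*) [NormedAddCommGroup X] [NormedSpace ℝ X] : Prop :=
  ∀ E : Submodule ℝ X, IsClosed (E : Set X) → TopologicalSpace.IsSeparable (E : Set X) →
    ∃ F : Submodule ℝ X, E ≤ F ∧ IsClosed (F : Set X) ∧
      TopologicalSpace.IsSeparable (F : Set X) ∧
      ∃ P : X →L[ℝ] X, P.comp P = P ∧ LinearMap.range (P : X →ₗ[ℝ] X) = F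

/-- A Banach space `X` has the separable extension property (SEP) if for every separable closed
subspace `E` of `X` there is a continuous linear operator `T : X → X` with separable range
fixing `E` pointwise. -/
def HasSEP (X : Type*) [NormedAddCommGroup X] [NormedSpace ℝ X] : Prop :=
  ∀ E : Submodule ℝ X, IsClosed (E : Set X) → TopologicalSpace.IsSeparable (E : Set X) →
    ∃ T : X →L[ℝ] X, TopologicalSpace.IsSeparable (Set.range T) ∧ ∀ x ∈ E, T x = x

section SCPAux

open TopologicalSpace Set

variable {X : Type v} [NormedAddCommGroup X] [NormedSpace ℝ X] [CompleteSpace X]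

omit [CompleteSpace X] in
lemma SCPAux.sep_closure_span {A : Set X} (hA : IsSeparable A) :
    IsSeparable (((Submodule.span ℝ A).topologicalClosure : Submodule ℝ X) : Set X) :=
  (hA.span (R := ℝ)).closure

open scoped Classical in
/-- One step of the SCP construction: a complemented separable closed subspace containing `A`. -/
def SCPstep (hSCP : HasSCP X) (A : Set X) : Submodule ℝ X :=
  if h : IsSeparable A then
    (hSCP (Submodule.span ℝ A).topologicalClosure
      (Submodule.isClosed_topologicalClosure _) (SCPAux.sep_closure_span h)).choose
  else ⊥

lemma SCPstep_spec (hSCP : HasSCP X) {A : Set X} (h : IsSeparable A) :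
    A ⊆ (SCPstep hSCP A : Set X) ∧ IsClosed (SCPstep hSCP A : Set X) ∧
      IsSeparable (SCPstep hSCP A : Set X) ∧
      ∃ P : X →L[ℝ] X, P.comp P = P ∧ LinearMap.range (P : X →ₗ[ℝ] X) = SCPstep hSCP A := by
  classical
  rw [SCPstep, dif_pos h]
  obtain ⟨hle, hcl, hsep, hP⟩ := (hSCP (Submodule.span ℝ A).topologicalClosure
      (Submodule.isClosed_topologicalClosure _) (SCPAux.sep_closure_span h)).choose_spec
  refine ⟨?_, hcl, hsep, hP⟩
  exact fun a ha => hle (Submodule.le_topologicalClosure _ (Submodule.subset_span ha))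

variable {ι : Type v} [LinearOrder ι] [IsWellOrder ι (· < ·)]

/-- The transfinite filtration of complemented separable subspaces. -/
def Fam (hSCP : HasSCP X) (x : ι → X) : ι → Submodule ℝ X :=
  (IsWellFounded.wf (r := ((· < ·) : ι → ι → Prop))).fix
    (fun i IH =>
      SCPstep hSCP (insert (x i) (⋃ j : {j // j < i}, ((IH j j.2 : Submodule ℝ X) : Set X))))

/-- The generating set at stage `i`. -/
def FamBase (hSCP : HasSCP X) (x : ι → X) (i : ι) : Set X :=
  insert (x i) (⋃ j : {j // j < i}, ((Fam hSCP x j : Submodule ℝ X) : Set X))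

lemma Fam_eq (hSCP : HasSCP X) (x : ι → X) (i : ι) :
    Fam hSCP x i = SCPstep hSCP (FamBase hSCP x i) := by
  rw [Fam, WellFounded.fix_eq]
  rfl

lemma Fam_sep (hSCP : HasSCP X) (x : ι → X)
    (hcount : ∀ i : ι, Set.Countable {j | j < i}) (i : ι) :
    TopologicalSpace.IsSeparable ((Fam hSCP x i : Submodule ℝ X) : Set X) := by
  induction i using ((IsWellFounded.wf (r := ((· < ·) : ι → ι → Prop))).induction) with
  | _ i IH =>
    have : Countable {j // j < i} := (hcount i).to_subtype
    have hA : IsSeparable (FamBase hSCP x i) := by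
      rw [FamBase, Set.insert_eq]
      exact IsSeparable.union ((Set.countable_singleton _).isSeparable)
        (isSeparable_iUnion.mpr fun j => IH j j.2)
    rw [Fam_eq]
    exact (SCPstep_spec hSCP hA).2.2.1

lemma FamBase_sep (hSCP : HasSCP X) (x : ι → X)
    (hcount : ∀ i : ι, Set.Countable {j | j < i}) (i : ι) :
    IsSeparable (FamBase hSCP x i) := by
  have : Countable {j // j < i} := (hcount i).to_subtype
  rw [FamBase, Set.insert_eq]
  exact IsSeparable.union ((Set.countable_singleton _).isSeparable)
    (isSeparable_iUnion.mpr fun j => Fam_sep hSCP x hcount j)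

lemma Fam_base_subset (hSCP : HasSCP X) (x : ι → X)
    (hcount : ∀ i : ι, Set.Countable {j | j < i}) (i : ι) :
    FamBase hSCP x i ⊆ (Fam hSCP x i : Submodule ℝ X) := by
  rw [Fam_eq]
  exact (SCPstep_spec hSCP (FamBase_sep hSCP x hcount i)).1

lemma Fam_closed (hSCP : HasSCP X) (x : ι → X)
    (hcount : ∀ i : ι, Set.Countable {j | j < i}) (i : ι) :
    IsClosed ((Fam hSCP x i : Submodule ℝ X) : Set X) := by
  rw [Fam_eq]
  exact (SCPstep_spec hSCP (FamBase_sep hSCP x hcount i)).2.1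

lemma Fam_proj (hSCP : HasSCP X) (x : ι → X)
    (hcount : ∀ i : ι, Set.Countable {j | j < i}) (i : ι) :
    ∃ P : X →L[ℝ] X, P.comp P = P ∧ LinearMap.range (P : X →ₗ[ℝ] X) = Fam hSCP x i := by
  rw [Fam_eq]
  exact (SCPstep_spec hSCP (FamBase_sep hSCP x hcount i)).2.2.2

lemma Fam_mono (hSCP : HasSCP X) (x : ι → X)
    (hcount : ∀ i : ι, Set.Countable {j | j < i}) :
    Monotone (Fam hSCP x) := by
  intro j i hji
  rcases eq_or_lt_of_le hji with rfl | h
  · exact le_rfl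
  · intro a ha
    exact Fam_base_subset hSCP x hcount i
      (Set.mem_insert_of_mem _ (Set.mem_iUnion.mpr ⟨⟨j, h⟩, ha⟩))

lemma Fam_mem (hSCP : HasSCP X) (x : ι → X)
    (hcount : ∀ i : ι, Set.Countable {j | j < i}) (i : ι) :
    x i ∈ Fam hSCP x i :=
  Fam_base_subset hSCP x hcount i (Set.mem_insert _ _)

lemma SCPAux.exists_bound {ι : Type v} [LinearOrder ι]
    (hcount : ∀ i : ι, Set.Countable {j | j < i}) (hbig : ¬ Countable ι)
    (f : ℕ → ι) : ∃ b, ∀ n, f n ≤ b := by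
  by_contra h
  push_neg at h
  apply hbig
  rw [← Set.countable_univ_iff]
  refine Set.Countable.mono ?_ (Set.countable_iUnion fun n => hcount (f n))
  intro j _
  obtain ⟨n, hn⟩ := h j
  exact Set.mem_iUnion.mpr ⟨n, hn⟩

end SCPAux

/-- A Banach space with the SCP and density character `ℵ₁` is the union of an increasing
`ω₁`-family of separable complemented closed subspaces, indexed by a well-ordered type of
cardinality `ℵ₁` all of whose proper initial segments are countable. -/
theorem scp_filtration_of_densChar_aleph_one {X : Type v}
    [NormedAddCommGroup X] [NormedSpace ℝ X] [CompleteSpace X]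
    (hSCP : HasSCP X) (hdens : densChar X = Cardinal.aleph 1) :
    ∃ (ι : Type v) (lo : LinearOrder ι),
      letI := lo
      IsWellOrder ι (· < ·) ∧
      Cardinal.mk ι = Cardinal.aleph 1 ∧
      (∀ i : ι, Set.Countable {j : ι | j < i}) ∧
      ∃ F : ι → Submodule ℝ X,
        Monotone F ∧
        (∀ i, IsClosed ((F i : Set X))) ∧
        (∀ i, TopologicalSpace.IsSeparable ((F i : Set X))) ∧
        (∀ i, ∃ P : X →L[ℝ] X, P.comp P = P ∧ LinearMap.range (P : X →ₗ[ℝ] X) = F i) ∧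
        (⋃ i, (F i : Set X)) = Set.univ := by
  unfold densChar at hdens
  -- a dense set of cardinality ℵ₁
  have hne : { c : Cardinal | ∃ s : Set X, Dense s ∧ Cardinal.mk s = c }.Nonempty :=
    ⟨Cardinal.mk (Set.univ : Set X), Set.univ, dense_univ, rfl⟩
  have hmem := csInf_mem hne
  rw [hdens] at hmem
  obtain ⟨s, hs_dense, hs_mk⟩ := hmem
  -- the index type
  set ι := (Cardinal.aleph 1 : Cardinal.{v}).ord.ToType with hι
  haveI : IsWellOrder ι (· < ·) := isWellOrder_lt
  have hmkι : Cardinal.mk ι = Cardinal.aleph 1 := by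
    rw [hι, Cardinal.mk_toType, Cardinal.card_ord]
  have hcount : ∀ i : ι, Set.Countable {j : ι | j < i} := by
    intro i
    rw [Cardinal.countable_iff_lt_aleph_one]
    have h1 := @Ordinal.card_typein ι ((· < ·)) isWellOrder_lt i
    have h2 := Cardinal.card_typein_toType_lt (Cardinal.aleph 1) i
    exact h1.trans_lt h2
  -- enumerate the dense set
  obtain ⟨e⟩ : Nonempty (ι ≃ s) := Cardinal.eq.mp (by rw [hmkι, hs_mk])
  set x : ι → X := fun i => (e i : X) with hx
  have hxrange : ∀ y ∈ s, ∃ i, x i = y := fun y hy => ⟨e.symm ⟨y, hy⟩, by simp [hx]⟩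
  refine ⟨ι, inferInstance, ?_, hmkι, hcount,
    Fam hSCP x, Fam_mono hSCP x hcount, Fam_closed hSCP x hcount,
    Fam_sep hSCP x hcount, Fam_proj hSCP x hcount, ?_⟩
  · exact isWellOrder_lt
  -- the union is everything
  rw [Set.eq_univ_iff_forall]
  intro a
  rw [Set.mem_iUnion]
  have ha : a ∈ closure s := hs_dense a
  obtain ⟨u, hu_mem, hu_tend⟩ := mem_closure_iff_seq_limit.mp ha
  choose f hf using fun n => hxrange (u n) (hu_mem n)
  have hbig : ¬ Countable ι := by
    rw [← Cardinal.mk_le_aleph0_iff, hmkι]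
    exact fun h => absurd (h.trans_lt Cardinal.aleph0_lt_aleph_one) (lt_irrefl _)
  obtain ⟨b, hb⟩ := SCPAux.exists_bound hcount hbig f
  refine ⟨b, (Fam_closed hSCP x hcount b).mem_of_tendsto hu_tend
    (Filter.Eventually.of_forall fun n => ?_)⟩
  rw [← hf n]
  exact Fam_mono hSCP x hcount (hb n) (Fam_mem hSCP x hcount (f n))

end
end

section
/- For every set Γ and every real number p with 1 ≤ p < ∞, the space ℓ_p(Γ) has the separable complementation property: every separable closed subspace of ℓ_p(Γ) is contained in a separable closed subspace that is the range of a continuous linear projection on ℓ_p(Γ). -/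
open scoped ENNReal

noncomputable section

/-- For every set `Γ` and every real `1 ≤ p < ∞`, the space `ℓ_p(Γ)` has the separable
complementation property. -/
theorem lp_hasSCP {Γ : Type*} (p : ℝ) (hp : 1 ≤ p) :
    letI : Fact (1 ≤ ENNReal.ofReal p) := ⟨ENNReal.one_le_ofReal.2 hp⟩
    HasSCP (lp (fun _ : Γ => ℝ) (ENNReal.ofReal p)) := by
  classical
  haveI : Fact (1 ≤ ENNReal.ofReal p) := ⟨ENNReal.one_le_ofReal.2 hp⟩
  set q : ℝ≥0∞ := ENNReal.ofReal p with hq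
  have hp0 : 0 < p := lt_of_lt_of_le zero_lt_one hp
  have hqt : q.toReal = p := ENNReal.toReal_ofReal hp0.le
  have hpt : 0 < q.toReal := by rw [hqt]; exact hp0
  have hqtop : q ≠ ∞ := ENNReal.ofReal_ne_top
  intro E hEclosed hEsep
  obtain ⟨c, hc_count, hc_sub⟩ := hEsep
  -- every element of `ℓ_p(Γ)` has countable support
  have supp_count : ∀ x : lp (fun _ : Γ => ℝ) q, (Function.support (⇑x)).Countable := by
    intro x
    have h1 : Summable fun γ => ‖x γ‖ ^ q.toReal := (lp.memℓp x).summable hpt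
    have h2 : Summable fun γ => (‖x γ‖₊ ^ q.toReal : NNReal) := by
      rw [← NNReal.summable_coe]
      simpa [NNReal.coe_rpow, coe_nnnorm] using h1
    refine (Summable.countable_support_nnreal _ h2).mono ?_
    intro γ hγ
    simp only [Function.mem_support] at hγ ⊢
    simp [NNReal.rpow_eq_zero_iff, nnnorm_eq_zero, hγ, hpt.ne']
  -- the countable set of coordinates supporting everything in `c`
  set S : Set Γ := ⋃ x ∈ c, Function.support (⇑x) with hSdef
  have hS : S.Countable := hc_count.biUnion fun x _ => supp_count x
  -- truncation to `S` stays in `ℓ_p`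
  have mem_trunc : ∀ x : lp (fun _ : Γ => ℝ) q, Memℓp (S.indicator ⇑x) q := by
    intro x
    apply memℓp_gen
    refine Summable.of_nonneg_of_le (fun γ => Real.rpow_nonneg (norm_nonneg _) _) (fun γ => ?_)
      ((lp.memℓp x).summable hpt)
    exact Real.rpow_le_rpow (norm_nonneg _) (norm_indicator_le_norm_self _ _) hpt.le
  let Pfun : lp (fun _ : Γ => ℝ) q → lp (fun _ : Γ => ℝ) q :=
    fun x => ⟨S.indicator ⇑x, mem_trunc x⟩
  have Pfun_apply : ∀ (x : lp (fun _ : Γ => ℝ) q) (γ : Γ),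
      (Pfun x : ∀ _ : Γ, ℝ) γ = S.indicator (⇑x) γ := fun _ _ => rfl
  let Pl : lp (fun _ : Γ => ℝ) q →ₗ[ℝ] lp (fun _ : Γ => ℝ) q :=
    { toFun := Pfun
      map_add' := by
        intro x y
        apply lp.ext
        funext γ
        show S.indicator (⇑(x + y)) γ = S.indicator (⇑x) γ + S.indicator (⇑y) γ
        by_cases h : γ ∈ S
        · rw [Set.indicator_of_mem h, Set.indicator_of_mem h, Set.indicator_of_mem h]; rfl
        · rw [Set.indicator_of_notMem h, Set.indicator_of_notMem h, Set.indicator_of_notMem h]; simp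
      map_smul' := by
        intro r x
        apply lp.ext
        funext γ
        show S.indicator (⇑(r • x)) γ = r • S.indicator (⇑x) γ
        by_cases h : γ ∈ S
        · rw [Set.indicator_of_mem h, Set.indicator_of_mem h]; rfl
        · rw [Set.indicator_of_notMem h, Set.indicator_of_notMem h]; simp }
  have Pnorm : ∀ x, ‖Pl x‖ ≤ ‖x‖ := by
    intro x
    refine lp.norm_le_of_tsum_le hpt (norm_nonneg x) ?_
    rw [lp.norm_rpow_eq_tsum hpt x]
    refine Summable.tsum_le_tsum (fun γ => ?_) ((mem_trunc x).summable hpt) ((lp.memℓp x).summable hpt)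
    exact Real.rpow_le_rpow (norm_nonneg _) (norm_indicator_le_norm_self _ _) hpt.le
  let P : lp (fun _ : Γ => ℝ) q →L[ℝ] lp (fun _ : Γ => ℝ) q :=
    Pl.mkContinuous 1 (fun x => by simpa using Pnorm x)
  have P_apply : ∀ (x : lp (fun _ : Γ => ℝ) q) (γ : Γ),
      (P x : ∀ _ : Γ, ℝ) γ = S.indicator (⇑x) γ := fun _ _ => rfl
  -- P fixes every element supported in S
  have Pfix : ∀ x : lp (fun _ : Γ => ℝ) q, Function.support (⇑x) ⊆ S → P x = x := by
    intro x hx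
    apply lp.ext
    funext γ
    rw [P_apply]
    by_cases h : γ ∈ S
    · exact Set.indicator_of_mem h _
    · rw [Set.indicator_of_notMem h]
      exact (Function.notMem_support.mp (fun hm => h (hx hm))).symm
  -- P is idempotent
  have hPP : P.comp P = P := by
    refine ContinuousLinearMap.ext fun x => ?_
    apply lp.ext
    funext γ
    simp only [ContinuousLinearMap.comp_apply, P_apply]
    by_cases h : γ ∈ S <;>
      simp [Set.indicator_of_mem, Set.indicator_of_notMem, h, P_apply]
  -- the range of P as a set is the fixed-point set
  have hFset : ((LinearMap.range (P : lp (fun _ : Γ => ℝ) q →ₗ[ℝ] lp (fun _ : Γ => ℝ) q) : Submodule ℝ (lp (fun _ : Γ => ℝ) q)) :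
      Set (lp (fun _ : Γ => ℝ) q)) = {x | P x = x} := by
    ext x
    simp only [SetLike.mem_coe, LinearMap.mem_range, Set.mem_setOf_eq]
    constructor
    · rintro ⟨y, rfl⟩
      have := DFunLike.congr_fun hPP y
      simpa [ContinuousLinearMap.comp_apply] using this
    · intro h
      exact ⟨x, h⟩
  have hFclosed : IsClosed ((LinearMap.range (P : lp (fun _ : Γ => ℝ) q →ₗ[ℝ] lp (fun _ : Γ => ℝ) q) : Submodule ℝ (lp (fun _ : Γ => ℝ) q)) :
      Set (lp (fun _ : Γ => ℝ) q)) := by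
    rw [hFset]
    exact isClosed_eq P.continuous continuous_id
  -- E ≤ range P
  have hEF : E ≤ LinearMap.range (P : lp (fun _ : Γ => ℝ) q →ₗ[ℝ] lp (fun _ : Γ => ℝ) q) := by
    intro x hx
    have hclosed : IsClosed {y : lp (fun _ : Γ => ℝ) q | P y = y} :=
      isClosed_eq P.continuous continuous_id
    have hc_fix : c ⊆ {y : lp (fun _ : Γ => ℝ) q | P y = y} := by
      intro y hy
      exact Pfix y (Set.subset_biUnion_of_mem (u := fun y : lp (fun _ : Γ => ℝ) q => Function.support (⇑y)) hy)
    have : x ∈ {y : lp (fun _ : Γ => ℝ) q | P y = y} :=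
      hclosed.closure_subset_iff.mpr hc_fix (hc_sub hx)
    exact ⟨x, this⟩
  -- separability of range P
  have hFsep : TopologicalSpace.IsSeparable
      ((LinearMap.range (P : lp (fun _ : Γ => ℝ) q →ₗ[ℝ] lp (fun _ : Γ => ℝ) q) : Submodule ℝ (lp (fun _ : Γ => ℝ) q)) :
        Set (lp (fun _ : Γ => ℝ) q)) := by
    set D : Set (lp (fun _ : Γ => ℝ) q) := (fun γ : Γ => lp.single (E := fun _ : Γ => ℝ) q γ (1 : ℝ)) '' S with hD
    have hDc : D.Countable := hS.image _
    have key : ((LinearMap.range (P : lp (fun _ : Γ => ℝ) q →ₗ[ℝ] lp (fun _ : Γ => ℝ) q) : Submodule ℝ (lp (fun _ : Γ => ℝ) q)) :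
        Set (lp (fun _ : Γ => ℝ) q)) ⊆ closure (Submodule.span ℝ D : Set (lp (fun _ : Γ => ℝ) q)) := by
      intro x hx
      rw [hFset] at hx
      have hfix : P x = x := hx
      have hsupp : Function.support (⇑x) ⊆ S := by
        intro γ hγ
        by_contra h
        apply hγ
        calc (⇑x) γ = (P x : ∀ _ : Γ, ℝ) γ := by rw [hfix]
          _ = 0 := by rw [P_apply]; exact Set.indicator_of_notMem h _
      have hsum := lp.hasSum_single hqtop x
      refine mem_closure_of_tendsto hsum ?_
      refine Filter.Eventually.of_forall fun s => ?_
      refine Submodule.sum_mem _ fun γ _ => ?_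
      by_cases h : γ ∈ S
      · have hsm : lp.single (E := fun _ : Γ => ℝ) q γ (x γ) = x γ • lp.single (E := fun _ : Γ => ℝ) q γ (1 : ℝ) := by
          rw [← lp.single_smul]
          norm_num
        rw [hsm]
        exact Submodule.smul_mem _ _ (Submodule.subset_span ⟨γ, h, rfl⟩)
      · have hx0 : x γ = 0 := Function.notMem_support.mp (fun hm => h (hsupp hm))
        have : lp.single (E := fun _ : Γ => ℝ) q γ (x γ) = 0 := by
          rw [hx0, show (0 : ℝ) = (0 : ℝ) • (1 : ℝ) by simp, lp.single_smul, zero_smul]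
        rw [this]
        exact Submodule.zero_mem _
    exact ((hDc.isSeparable.span).closure).mono key
  exact ⟨LinearMap.range (P : lp (fun _ : Γ => ℝ) q →ₗ[ℝ] lp (fun _ : Γ => ℝ) q), hEF, hFclosed, hFsep, P, hPP, rfl⟩

end
end

section
/- Let A and B be real Banach spaces, let Φ : A → B be a homogeneous map (Φ(t·a) = t·Φ(a) for all t ∈ ℝ, a ∈ A) which is 1-linear with constant C ≥ 0, i.e., ‖Φ(∑_{k∈s} a_k) − ∑_{k∈s} Φ(a_k)‖ ≤ C ∑_{k∈s} ‖a_k‖ for every finite family (a_k)_{k∈s} in A. Let S ⊆ A be countable and let A_∞ be the linear span of S. Then there exist a countable set S' ⊆ A_∞, a constant M ≥ 0, and a homogeneous map Ψ : A_∞ → B which is 1-linear with some constant, such that: Ψ(a) = Φ(a) for every a ∈ S ∪ S'; ‖Ψ(a) − Φ(a)‖ ≤ M‖a‖ for every a ∈ A_∞; and Ψ(a) lies in the linear span of Φ(S ∪ S') for every a ∈ A_∞ (in particular the range of Ψ is contained in a separable subspace of B). -/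
noncomputable section

set_option maxHeartbeats 1000000
set_option synthInstance.maxHeartbeats 1000000

set_option maxHeartbeats 1000000
open Submodule Set

def ratCombos {A : Type*} [NormedAddCommGroup A] [NormedSpace ℝ A] (S : Set A) : Set A :=
  Set.range (fun l : List (↥S × ℚ) => (l.map fun p => ((p.2 : ℝ) • (p.1 : A))).sum)

lemma ratCombos_countable {A : Type*} [NormedAddCommGroup A] [NormedSpace ℝ A]
    {S : Set A} (hS : S.Countable) : (ratCombos S).Countable := by
  haveI := hS.to_subtype
  exact Set.countable_range _

lemma ratCombos_subset_span {A : Type*} [NormedAddCommGroup A] [NormedSpace ℝ A]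
    (S : Set A) : ratCombos S ⊆ (Submodule.span ℝ S : Set A) := by
  rintro _ ⟨l, rfl⟩
  induction l with
  | nil => simp
  | cons p l ih =>
    simp only [List.map_cons, List.sum_cons]
    exact Submodule.add_mem _ (Submodule.smul_mem _ _ (Submodule.subset_span p.1.2)) ih

lemma sum_ratCombo_mem {A : Type*} [NormedAddCommGroup A] [NormedSpace ℝ A]
    {S : Set A} (F : Finset A) (hFS : ↑F ⊆ S) (q : A → ℚ) :
    ∑ x ∈ F, (q x : ℝ) • x ∈ ratCombos S := by
  refine ⟨F.attach.toList.map (fun x => (⟨x.1, hFS x.2⟩, q x.1)), ?_⟩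
  show (List.map _ (List.map _ _)).sum = _
  rw [List.map_map]
  have : ((fun p : ↥S × ℚ => ((p.2 : ℝ) • (p.1 : A))) ∘ fun x : {x // x ∈ F} =>
      ((⟨x.1, hFS x.2⟩ : ↥S), q x.1)) = fun x : {x // x ∈ F} => (q x.1 : ℝ) • x.1 := rfl
  rw [this, Finset.sum_map_toList, Finset.sum_attach F (fun x => (q x : ℝ) • x)]
set_option maxHeartbeats 1000000
open Submodule Set

lemma aux1 {A : Type*} [NormedAddCommGroup A] [NormedSpace ℝ A] (F : Set A) (hF : F.Finite) :
    ∃ K : ℝ, 0 ≤ K ∧ ∀ v ∈ Submodule.span ℝ F, ∃ (n : ℕ) (t : Fin n → ℝ) (x : Fin n → A),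
      (∀ i, x i ∈ F) ∧ ∑ i, t i • x i = v ∧ ∑ i, |t i| * ‖x i‖ ≤ K * ‖v‖ := by
  obtain ⟨b, hbF, hbspan, hli⟩ := exists_linearIndependent ℝ F
  have hbfin : b.Finite := hF.subset hbF
  haveI := hbfin.fintype
  have hrange : Set.range ((↑) : b → A) = b := Subtype.range_coe
  set W := Submodule.span ℝ (Set.range ((↑) : b → A)) with hW
  have hWF : W = Submodule.span ℝ F := by rw [hW, hrange, hbspan]
  haveI : FiniteDimensional ℝ W := by
    rw [hW, hrange]
    exact FiniteDimensional.span_of_finite ℝ hbfin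
  let B : Module.Basis b ℝ W := Module.Basis.span hli
  let f : b → (W →L[ℝ] ℝ) := fun i => LinearMap.toContinuousLinearMap (B.coord i)
  refine ⟨∑ i : b, ‖f i‖ * ‖(i : A)‖, Finset.sum_nonneg fun i _ =>
    mul_nonneg (ContinuousLinearMap.opNorm_nonneg _) (norm_nonneg _), fun v hv => ?_⟩
  have hvW : v ∈ W := hWF ▸ hv
  set w : W := ⟨v, hvW⟩ with hw
  have hrepr : ∑ i : b, B.repr w i • (B i : A) = v := by
    have := B.sum_repr w
    calc ∑ i : b, B.repr w i • (B i : A) = ((∑ i : b, B.repr w i • B i : W) : A) := by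
          push_cast [Submodule.coe_sum]; rfl
      _ = v := by rw [this]
  refine ⟨Fintype.card b, fun j => B.repr w ((Fintype.equivFin b).symm j),
    fun j => (((Fintype.equivFin b).symm j : b) : A), fun j => hbF (Subtype.mem _), ?_, ?_⟩
  · rw [← hrepr]
    rw [← Equiv.sum_comp (Fintype.equivFin b).symm fun i => B.repr w i • (B i : A)]
    congr 1; funext j; rw [Module.Basis.span_apply]
  · have h2 := Equiv.sum_comp (Fintype.equivFin b).symm (fun i : b => |B.repr w i| * ‖(i : A)‖)
    dsimp only at h2 ⊢
    rw [h2]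
    have hnorm : ‖w‖ = ‖v‖ := rfl
    calc ∑ i : b, |B.repr w i| * ‖(i : A)‖
        ≤ ∑ i : b, (‖f i‖ * ‖w‖) * ‖(i : A)‖ := by
          apply Finset.sum_le_sum
          intro i _
          apply mul_le_mul_of_nonneg_right _ (norm_nonneg _)
          have : B.repr w i = f i w := by
            simp [f, LinearMap.coe_toContinuousLinearMap', Module.Basis.coord_apply]
          rw [this, ← Real.norm_eq_abs]
          exact (f i).le_opNorm w
      _ = (∑ i : b, ‖f i‖ * ‖(i : A)‖) * ‖v‖ := by
          rw [Finset.sum_mul]; congr 1; funext i; rw [hnorm]; ring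

lemma aux2 {A : Type*} [NormedAddCommGroup A] [NormedSpace ℝ A] (F : Finset A)
    (v : A) (hv : v ∈ Submodule.span ℝ (F : Set A)) (ε : ℝ) (hε : 0 < ε) :
    ∃ q : A → ℚ, ‖v - ∑ x ∈ F, (q x : ℝ) • x‖ < ε := by
  obtain ⟨c, hc⟩ := mem_span_finset.mp hv
  set Z : ℝ := ∑ x ∈ F, ‖x‖ with hZ
  have hZ0 : 0 ≤ Z := Finset.sum_nonneg fun x _ => norm_nonneg x
  have hδ : 0 < ε / (Z + 1) := div_pos hε (by linarith)
  choose q hq using fun x : A => exists_rat_near (K := ℝ) (c x) hδ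
  refine ⟨q, ?_⟩
  have hdq : v - ∑ x ∈ F, (q x : ℝ) • x = ∑ x ∈ F, (c x - (q x : ℝ)) • x := by
    rw [← hc.2, ← Finset.sum_sub_distrib]
    congr 1; funext x
    rw [sub_smul]
  rw [hdq]
  calc ‖∑ x ∈ F, (c x - (q x : ℝ)) • x‖ ≤ ∑ x ∈ F, ‖(c x - (q x : ℝ)) • x‖ :=
        norm_sum_le _ _
    _ ≤ ∑ x ∈ F, (ε / (Z + 1)) * ‖x‖ := by
        apply Finset.sum_le_sum
        intro x _
        rw [norm_smul, Real.norm_eq_abs]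
        exact mul_le_mul_of_nonneg_right (le_of_lt (hq x)) (norm_nonneg x)
    _ = (ε / (Z + 1)) * Z := by rw [← Finset.mul_sum]
    _ < ε := by
        rw [div_mul_eq_mul_div, div_lt_iff₀ (by linarith)]
        nlinarith

lemma aux3 {A : Type*} [NormedAddCommGroup A] [NormedSpace ℝ A] {S : Set A}
    (a : A) (ha : a ∈ Submodule.span ℝ S) :
    ∃ (n : ℕ) (t : Fin n → ℝ) (x : Fin n → A), (∀ i, x i ∈ S ∪ ratCombos S) ∧
      ∑ i, t i • x i = a ∧ ∑ i, |t i| * ‖x i‖ ≤ 3 * ‖a‖ := by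
  rcases eq_or_ne a 0 with rfl | ha0
  · exact ⟨0, fun i => 0, fun i => 0, fun i => i.elim0, by simp, by simp⟩
  obtain ⟨F, hFS, hmem⟩ := Submodule.mem_span_finite_of_mem_span ha
  obtain ⟨K, hK0, hKrep⟩ := aux1 (F : Set A) F.finite_toSet
  have hε : 0 < ‖a‖ / (K + 1) := div_pos (norm_pos_iff.mpr ha0) (by linarith)
  obtain ⟨q, hq⟩ := aux2 F a hmem _ hε
  set d : A := ∑ x ∈ F, (q x : ℝ) • x with hd
  have hdF : d ∈ Submodule.span ℝ (F : Set A) :=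
    sum_mem fun x hx => smul_mem _ _ (subset_span hx)
  have hrF : a - d ∈ Submodule.span ℝ (F : Set A) := sub_mem hmem hdF
  obtain ⟨m, t', x', hx'F, hsum', hcost'⟩ := hKrep (a - d) hrF
  refine ⟨m + 1, Fin.cons 1 t', Fin.cons d x', ?_, ?_, ?_⟩
  · intro i
    refine Fin.cases ?_ ?_ i
    · exact Or.inr (sum_ratCombo_mem F hFS q)
    · intro j
      simp only [Fin.cons_succ]
      exact Or.inl (hFS (hx'F j))
  · rw [Fin.sum_univ_succ]
    simp only [Fin.cons_succ, Fin.cons_zero, one_smul]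
    rw [hsum']
    abel
  · rw [Fin.sum_univ_succ]
    have h1 : ‖a - d‖ ≤ ‖a‖ / (K + 1) := le_of_lt hq
    have h2 : K * ‖a - d‖ ≤ ‖a‖ := by
      calc K * ‖a - d‖ ≤ K * (‖a‖ / (K + 1)) :=
            mul_le_mul_of_nonneg_left h1 hK0
        _ ≤ ‖a‖ := by
            rw [mul_div_assoc']
            rw [div_le_iff₀ (by linarith)]
            nlinarith [norm_nonneg a]
    have h3 : ‖a - d‖ ≤ ‖a‖ := by
      refine h1.trans ?_
      rw [div_le_iff₀ (by linarith)]
      nlinarith [norm_nonneg a]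
    have h4 : ‖d‖ ≤ 2 * ‖a‖ := by
      have hrev : ‖d‖ - ‖a‖ ≤ ‖a - d‖ := by
        rw [norm_sub_rev]
        exact norm_sub_norm_le d a
      linarith
    have h5 : ∑ i, |t' i| * ‖x' i‖ ≤ ‖a‖ := (hcost' ).trans h2
    simp only [Fin.cons_succ, Fin.cons_zero, abs_one, one_mul]
    linarith

/-- Separable reduction for `1`-linear (quasilinear) maps: given a homogeneous `1`-linear map
`Φ : A → B` with constant `C` and a countable set `S ⊆ A` with linear span `A_∞`, there are a
countable `S' ⊆ A_∞`, a constant `M ≥ 0`, and a homogeneous `1`-linear map `Ψ : A_∞ → B` that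
agrees with `Φ` on `S ∪ S'`, is at uniform distance at most `M` from `Φ` on `A_∞`, and takes
values in the span of `Φ(S ∪ S')` (hence in a separable subspace of `B`). -/
theorem quasilinear_separable_reduction {A B : Type*}
    [NormedAddCommGroup A] [NormedSpace ℝ A] [CompleteSpace A]
    [NormedAddCommGroup B] [NormedSpace ℝ B] [CompleteSpace B]
    (Φ : A → B) (hΦhom : ∀ (t : ℝ) (a : A), Φ (t • a) = t • Φ a)
    (C : ℝ) (hC : 0 ≤ C)
    (hΦ : ∀ (s : Finset ℕ) (a : ℕ → A),
      ‖Φ (∑ k ∈ s, a k) - ∑ k ∈ s, Φ (a k)‖ ≤ C * ∑ k ∈ s, ‖a k‖)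
    (S : Set A) (hS : S.Countable) :
    ∃ (S' : Set A) (M : ℝ) (Ψ : (Submodule.span ℝ S : Submodule ℝ A) → B),
      S' ⊆ (Submodule.span ℝ S : Set A) ∧ S'.Countable ∧ 0 ≤ M ∧
      (∀ (t : ℝ) (a : Submodule.span ℝ S), Ψ (t • a) = t • Ψ a) ∧
      (∃ C' : ℝ, 0 ≤ C' ∧ ∀ (s : Finset ℕ) (a : ℕ → Submodule.span ℝ S),
        ‖Ψ (∑ k ∈ s, a k) - ∑ k ∈ s, Ψ (a k)‖ ≤ C' * ∑ k ∈ s, ‖a k‖) ∧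
      (∀ a : Submodule.span ℝ S, (a : A) ∈ S ∪ S' → Ψ a = Φ a) ∧
      (∀ a : Submodule.span ℝ S, ‖Ψ a - Φ (a : A)‖ ≤ M * ‖a‖) ∧
      (∀ a : Submodule.span ℝ S, Ψ a ∈ Submodule.span ℝ (Φ '' (S ∪ S'))) := by
  classical
  set V : Submodule ℝ A := Submodule.span ℝ S with hV
  set T : Set A := S ∪ ratCombos S with hT
  have hΦ0 : Φ 0 = 0 := by
    have := hΦhom 0 0
    rwa [zero_smul, zero_smul] at this
  -- step 1 : the rep-based approximation Ψ₀
  have hrepΦ : ∀ a : V, ∃ y : B, y ∈ Submodule.span ℝ (Φ '' T) ∧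
      ‖y - Φ (a : A)‖ ≤ 3 * C * ‖(a : A)‖ := by
    intro a
    obtain ⟨n, t, x, hxT, hsum, hcost⟩ := aux3 (S := S) (a : A) a.2
    refine ⟨∑ i : Fin n, t i • Φ (x i), sum_mem fun i _ => smul_mem _ _
      (Submodule.subset_span ⟨x i, hxT i, rfl⟩), ?_⟩
    set f : ℕ → A := fun k => if h : k < n then t ⟨k, h⟩ • x ⟨k, h⟩ else 0 with hf
    have hfi : ∀ i : Fin n, f i = t i • x i := fun i => by simp [hf, i.isLt]
    have h1 : ∑ k ∈ Finset.range n, f k = (a : A) := by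
      rw [← Fin.sum_univ_eq_sum_range f n, ← hsum]
      exact Finset.sum_congr rfl fun i _ => hfi i
    have h2 : ∑ k ∈ Finset.range n, Φ (f k) = ∑ i : Fin n, t i • Φ (x i) := by
      rw [← Fin.sum_univ_eq_sum_range (fun k => Φ (f k)) n]
      exact Finset.sum_congr rfl fun i _ => by rw [hfi i, hΦhom]
    have h3 : ∑ k ∈ Finset.range n, ‖f k‖ = ∑ i : Fin n, |t i| * ‖x i‖ := by
      rw [← Fin.sum_univ_eq_sum_range (fun k => ‖f k‖) n]
      exact Finset.sum_congr rfl fun i _ => by rw [hfi i, norm_smul, Real.norm_eq_abs]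
    have := hΦ (Finset.range n) f
    rw [h1, h2, h3] at this
    rw [norm_sub_rev]
    calc ‖Φ (a : A) - ∑ i : Fin n, t i • Φ (x i)‖ ≤ C * ∑ i : Fin n, |t i| * ‖x i‖ := this
      _ ≤ C * (3 * ‖(a : A)‖) := mul_le_mul_of_nonneg_left hcost hC
      _ = 3 * C * ‖(a : A)‖ := by ring
  choose Ψ₀ hmem₀ hclose₀ using hrepΦ
  -- step 2 : the ray equivalence
  let r : V → V → Prop := fun a b => ∃ t : ℝ, t ≠ 0 ∧ a = t • b
  have hrefl : ∀ a, r a a := fun a => ⟨1, one_ne_zero, (one_smul _ _).symm⟩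
  have hsymm : ∀ {a b}, r a b → r b a := by
    rintro a b ⟨t, ht, rfl⟩
    exact ⟨t⁻¹, inv_ne_zero ht, by rw [smul_smul, inv_mul_cancel₀ ht, one_smul]⟩
  have htrans : ∀ {a b c}, r a b → r b c → r a c := by
    rintro a b c ⟨t, ht, rfl⟩ ⟨u, hu, rfl⟩
    exact ⟨t * u, mul_ne_zero ht hu, (smul_smul t u c)⟩
  let sd : Setoid V := ⟨r, ⟨hrefl, hsymm, htrans⟩⟩
  let c : V → V := fun a => (Quotient.mk sd a).out
  have hc_rel : ∀ a : V, r (c a) a := fun a => @Quotient.exact V sd _ _ (Quotient.out_eq (Quotient.mk sd a))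
  have hc_eq : ∀ {a b : V}, r a b → c a = c b := fun hab =>
    congrArg Quotient.out (Quotient.sound hab)
  -- the base function on representatives
  let g : V → B := fun z =>
    if h : ∃ t : ℝ, t ≠ 0 ∧ ((t • z : V) : A) ∈ T then Φ (z : A) else Ψ₀ z
  -- coefficient of a over c a
  have hcoeff : ∀ a : V, a ≠ 0 → ∃ s : ℝ, s ≠ 0 ∧ a = s • c a := by
    intro a ha
    obtain ⟨t, ht, htc⟩ := hc_rel a
    exact ⟨t⁻¹, inv_ne_zero ht, by rw [htc, smul_smul, inv_mul_cancel₀ ht, one_smul]⟩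
  let Ψ : V → B := fun a =>
    if h : a = 0 then 0 else (Classical.choose (hcoeff a h)) • g (c a)
  have hΨ0 : Ψ 0 = 0 := dif_pos rfl
  have hc_ne : ∀ a : V, a ≠ 0 → c a ≠ 0 := by
    intro a ha hc0
    obtain ⟨s, hs, hsa⟩ := hcoeff a ha
    rw [hc0, smul_zero] at hsa
    exact ha hsa
  -- g is close to Φ and in the span
  have hg_close : ∀ z : V, ‖g z - Φ (z : A)‖ ≤ 3 * C * ‖(z : A)‖ := by
    intro z
    by_cases h : ∃ t : ℝ, t ≠ 0 ∧ ((t • z : V) : A) ∈ T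
    · simp only [g, dif_pos h, sub_self, norm_zero]
      positivity
    · simp only [g, dif_neg h]
      exact hclose₀ z
  have hg_mem : ∀ z : V, g z ∈ Submodule.span ℝ (Φ '' T) := by
    intro z
    by_cases h : ∃ t : ℝ, t ≠ 0 ∧ ((t • z : V) : A) ∈ T
    · simp only [g, dif_pos h]
      obtain ⟨t, ht, htT⟩ := h
      have : Φ (z : A) = t⁻¹ • Φ ((t • z : V) : A) := by
        rw [Submodule.coe_smul, hΦhom, smul_smul, inv_mul_cancel₀ ht, one_smul]
      rw [this]
      exact smul_mem _ _ (Submodule.subset_span ⟨_, htT, rfl⟩)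
    · simp only [g, dif_neg h]
      exact hmem₀ z
  -- key pointwise facts about Ψ
  have hΨ_close : ∀ a : V, ‖Ψ a - Φ (a : A)‖ ≤ 3 * C * ‖(a : A)‖ := by
    intro a
    by_cases ha : a = 0
    · rw [ha]
      simp only [hΨ0, Submodule.coe_zero, hΦ0, sub_zero, norm_zero]
      positivity
    · have hs := Classical.choose_spec (hcoeff a ha)
      set s := Classical.choose (hcoeff a ha)
      obtain ⟨hs0, hsa⟩ := hs
      have hΨa : Ψ a = s • g (c a) := dif_neg ha
      have hΦa : Φ (a : A) = s • Φ ((c a : V) : A) := by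
        conv_lhs => rw [hsa]
        rw [Submodule.coe_smul, hΦhom]
      rw [hΨa, hΦa, ← smul_sub, norm_smul, Real.norm_eq_abs]
      calc |s| * ‖g (c a) - Φ ((c a : V) : A)‖ ≤ |s| * (3 * C * ‖((c a : V) : A)‖) :=
            mul_le_mul_of_nonneg_left (hg_close (c a)) (abs_nonneg s)
        _ = 3 * C * (|s| * ‖((c a : V) : A)‖) := by ring
        _ = 3 * C * ‖(a : A)‖ := by
            conv_rhs => rw [hsa]
            rw [Submodule.coe_smul, norm_smul, Real.norm_eq_abs]
  have hΨ_mem : ∀ a : V, Ψ a ∈ Submodule.span ℝ (Φ '' T) := by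
    intro a
    by_cases ha : a = 0
    · rw [ha, hΨ0]; exact Submodule.zero_mem _
    · rw [show Ψ a = _ • g (c a) from dif_neg ha]
      exact smul_mem _ _ (hg_mem (c a))
  -- homogeneity
  have hΨ_hom : ∀ (t : ℝ) (a : V), Ψ (t • a) = t • Ψ a := by
    intro t a
    by_cases ht : t = 0
    · rw [ht, zero_smul, zero_smul, hΨ0]
    by_cases ha : a = 0
    · rw [ha, smul_zero, hΨ0, smul_zero]
    have hta : t • a ≠ 0 := smul_ne_zero ht ha
    have hcc : c (t • a) = c a := hc_eq ⟨t, ht, rfl⟩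
    have h1 := Classical.choose_spec (hcoeff (t • a) hta)
    set s1 := Classical.choose (hcoeff (t • a) hta)
    have h2 := Classical.choose_spec (hcoeff a ha)
    set s2 := Classical.choose (hcoeff a ha)
    have hs12 : s1 = t * s2 := by
      have hca : c a ≠ 0 := hc_ne a ha
      have hA := h1.2
      rw [hcc] at hA
      have hB : t • a = (t * s2) • c a := by rw [mul_smul, ← h2.2]
      exact smul_left_injective ℝ hca (hA.symm.trans hB)
    rw [show Ψ (t • a) = s1 • g (c (t • a)) from dif_neg hta,
      show Ψ a = s2 • g (c a) from dif_neg ha, hcc, hs12, mul_smul]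
  -- agreement on T
  have hΨ_agree : ∀ a : V, (a : A) ∈ T → Ψ a = Φ (a : A) := by
    intro a haT
    by_cases ha : a = 0
    · rw [ha, hΨ0, Submodule.coe_zero, hΦ0]
    · have hs := Classical.choose_spec (hcoeff a ha)
      set s := Classical.choose (hcoeff a ha)
      obtain ⟨hs0, hsa⟩ := hs
      have hcond : ∃ t : ℝ, t ≠ 0 ∧ ((t • (c a) : V) : A) ∈ T := ⟨s, hs0, by rw [← hsa]; exact haT⟩
      rw [show Ψ a = s • g (c a) from dif_neg ha, show g (c a) = Φ ((c a : V) : A) from dif_pos hcond,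
        ← hΦhom, ← Submodule.coe_smul, ← hsa]
  -- assemble
  refine ⟨ratCombos S, 3 * C, Ψ, ratCombos_subset_span S, ratCombos_countable hS,
    by positivity, hΨ_hom, ⟨7 * C, by positivity, ?_⟩, hΨ_agree, ?_, hΨ_mem⟩
  · intro s a
    have hcoe : ((∑ k ∈ s, a k : V) : A) = ∑ k ∈ s, ((a k : A)) := by
      exact_mod_cast Submodule.coe_sum _ _ _
    have hnorm : ∀ b : V, ‖b‖ = ‖(b : A)‖ := fun b => rfl
    calc ‖Ψ (∑ k ∈ s, a k) - ∑ k ∈ s, Ψ (a k)‖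
        ≤ ‖Ψ (∑ k ∈ s, a k) - Φ ((∑ k ∈ s, a k : V) : A)‖ +
          ‖Φ ((∑ k ∈ s, a k : V) : A) - ∑ k ∈ s, Φ ((a k : A))‖ +
          ‖∑ k ∈ s, Φ ((a k : A)) - ∑ k ∈ s, Ψ (a k)‖ := by
            have := norm_add₃_le (a := Ψ (∑ k ∈ s, a k) - Φ ((∑ k ∈ s, a k : V) : A))
              (b := Φ ((∑ k ∈ s, a k : V) : A) - ∑ k ∈ s, Φ ((a k : A)))
              (c := ∑ k ∈ s, Φ ((a k : A)) - ∑ k ∈ s, Ψ (a k))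
            simpa using this
      _ ≤ 3 * C * ∑ k ∈ s, ‖a k‖ + C * ∑ k ∈ s, ‖a k‖ + 3 * C * ∑ k ∈ s, ‖a k‖ := by
          gcongr ?_ + ?_ + ?_
          · calc ‖Ψ (∑ k ∈ s, a k) - Φ ((∑ k ∈ s, a k : V) : A)‖
                ≤ 3 * C * ‖((∑ k ∈ s, a k : V) : A)‖ := hΨ_close _
              _ ≤ 3 * C * ∑ k ∈ s, ‖a k‖ := by
                  apply mul_le_mul_of_nonneg_left _ (by positivity)
                  rw [hcoe]
                  exact (norm_sum_le _ _).trans (le_of_eq rfl)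
          · rw [hcoe]
            exact hΦ s (fun k => (a k : A))
          · rw [← Finset.sum_sub_distrib]
            calc ‖∑ k ∈ s, (Φ ((a k : A)) - Ψ (a k))‖ ≤ ∑ k ∈ s, ‖Φ ((a k : A)) - Ψ (a k)‖ :=
                  norm_sum_le _ _
              _ ≤ ∑ k ∈ s, 3 * C * ‖a k‖ := by
                  apply Finset.sum_le_sum
                  intro k _
                  rw [norm_sub_rev]
                  exact hΨ_close (a k)
              _ = 3 * C * ∑ k ∈ s, ‖a k‖ := by rw [Finset.mul_sum]
      _ = 7 * C * ∑ k ∈ s, ‖a k‖ := by ring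
  · intro a
    exact hΨ_close a

end
end
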